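/- arXiv:2402.02250 — 6 statements merged into one kernel-verified Lean document; each statement's English description precedes it below -/
import Mathlib

section
/- A partition λ = (λ₁ ≥ λ₂ ≥ … ≥ λ_r > 0) is a palindrome partition (i.e. B(λ) equals its reversal) if and only if λ_i + λ_{r+2−i} = λ₁ + 1 for every i with 2 ≤ i ≤ r. -/
/-- A partition encoded as its list of parts in weakly decreasing order,
all parts positive. -/
def IsPartition (l : List ℕ) : Prop :=
  List.Pairwise (· ≥ ·) l ∧ ∀ x ∈ l, 0 < x

/-- Auxiliary: given the previous part and the remaining parts (read from the
smallest part upward), produce the rest of the boundary word. -/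
def wordAux : ℕ → List ℕ → List Bool
  | _, [] => []
  | prev, a :: rest => (false :: List.replicate (a - prev) true) ++ wordAux a rest

/-- `partitionWord l` is the word `B(λ)`: trace the southeast boundary of the
Young diagram of `λ` from southwest to northeast, recording `true` for each
horizontal step and `false` for each vertical step, then delete the initial
`true` and the final `false`. -/
def partitionWord (l : List ℕ) : List Bool :=
  match l.reverse with
  | [] => []
  | a :: rest => List.replicate (a - 1) true ++ wordAux a rest

/-- The conjugate (transpose) partition. -/
def conjugate (l : List ℕ) : List ℕ :=
  (List.range l.headI).map fun j => (l.filter fun x => decide (j < x)).length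

/-- `PP n` is the number of palindrome partitions of `n`. -/
noncomputable def PP (n : ℕ) : ℕ :=
  {l : List ℕ | IsPartition l ∧ l.sum = n ∧
    partitionWord l = (partitionWord l).reverse}.ncard

/-- `RCount n` is the number of partitions `λ` of `n` such that the partition
corresponding to the reversed word `B(λ)ʳ` is also a partition of `n`. -/
noncomputable def RCount (n : ℕ) : ℕ :=
  {l : List ℕ | IsPartition l ∧ l.sum = n ∧
    ∃ μ : List ℕ, IsPartition μ ∧ μ.sum = n ∧
      partitionWord μ = (partitionWord l).reverse}.ncard

/-- `T n k` is the number of nondecreasing sequences of `n` integers in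
`[-k, k]` summing to zero. -/
noncomputable def T (n k : ℕ) : ℕ :=
  {f : Fin n → ℤ | (∀ i j : Fin n, i ≤ j → f i ≤ f j) ∧
    (∀ i, -(k : ℤ) ≤ f i ∧ f i ≤ (k : ℤ)) ∧ ∑ i, f i = 0}.ncard

/-- `NRect a b` is the number of partitions of `a*b/2` with at most `a` parts,
each part at most `b`. -/
noncomputable def NRect (a b : ℕ) : ℕ :=
  {μ : Fin a → ℕ | (∀ i j : Fin a, i ≤ j → μ j ≤ μ i) ∧
    (∀ i, μ i ≤ b) ∧ ∑ i, μ i = a * b / 2}.ncard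

namespace PalAux

def Daux : ℕ → List ℕ → List ℕ
  | _, [] => []
  | prev, a :: rest => (a - prev) :: Daux a rest

def D : List ℕ → List ℕ
  | [] => []
  | a :: rest => (a - 1) :: Daux a rest

def waux : List ℕ → List Bool
  | [] => []
  | b :: rest => (false :: List.replicate b true) ++ waux rest

def W : List ℕ → List Bool
  | [] => []
  | a :: rest => List.replicate a true ++ waux rest

@[simp] lemma waux_nil_eq : waux [] = [] := rfl
@[simp] lemma waux_cons_eq (b : ℕ) (rest : List ℕ) :
    waux (b :: rest) = (false :: List.replicate b true) ++ waux rest := rfl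

def Wp (m : List ℕ) : List Bool :=
  (m.map fun b => List.replicate b true ++ [false]).flatten

lemma wordAux_eq (m : List ℕ) : ∀ prev, wordAux prev m = waux (Daux prev m) := by
  induction m with
  | nil => intro prev; rfl
  | cons a rest ih => intro prev; simp [wordAux, Daux, waux, ih]

lemma partitionWord_eq (l : List ℕ) : partitionWord l = W (D l.reverse) := by
  unfold partitionWord
  cases h : l.reverse with
  | nil => rfl
  | cons a rest => simp [D, W, wordAux_eq]

lemma waux_append (u v : List ℕ) : waux (u ++ v) = waux u ++ waux v := by
  induction u with
  | nil => rfl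
  | cons b u ih => simp [waux, ih]

lemma Wp_append (u v : List ℕ) : Wp (u ++ v) = Wp u ++ Wp v := by
  simp [Wp]

lemma waux_snoc (m : List ℕ) (a : ℕ) :
    waux (m ++ [a]) = false :: (Wp m ++ List.replicate a true) := by
  induction m with
  | nil => simp [waux, show waux [] = [] from rfl, Wp]
  | cons b m ih => simp [waux, ih, Wp]

lemma W_snoc (m : List ℕ) (a : ℕ) :
    W (m ++ [a]) = Wp m ++ List.replicate a true := by
  cases m with
  | nil => simp [W, Wp]
  | cons c m' => simp [W, waux_snoc, Wp]

lemma waux_reverse (m : List ℕ) : (waux m).reverse = Wp m.reverse := by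
  induction m with
  | nil => rfl
  | cons b m ih =>
      simp only [waux, List.reverse_append, List.reverse_cons, ih,
        List.reverse_replicate, List.reverse_nil, List.nil_append]
      rw [show (List.replicate b true ++ [false] : List Bool) = Wp [b] by simp [Wp],
        ← Wp_append]

lemma W_reverse (d : List ℕ) : (W d).reverse = W d.reverse := by
  cases d with
  | nil => rfl
  | cons a m =>
      rw [List.reverse_cons, W_snoc,
        show W (a :: m) = List.replicate a true ++ waux m from rfl]
      simp [waux_reverse]

lemma split_lemma : ∀ (a a' : ℕ) (u u' : List Bool),
    List.replicate a true ++ false :: u = List.replicate a' true ++ false :: u' →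
    a = a' ∧ u = u' := by
  intro a
  induction a with
  | zero =>
      intro a' u u' h
      cases a' with
      | zero => simpa using h
      | succ k => simp [List.replicate_succ] at h
  | succ k ih =>
      intro a' u u' h
      cases a' with
      | zero => simp [List.replicate_succ] at h
      | succ k' =>
          simp only [List.replicate_succ, List.cons_append, List.cons.injEq] at h
          obtain ⟨h1, h2⟩ := ih k' u u' h.2
          exact ⟨by omega, h2⟩

lemma waux_inj : ∀ (rest rest' : List ℕ), rest.length = rest'.length →
    ∀ a a', List.replicate a true ++ waux rest = List.replicate a' true ++ waux rest' →
    a = a' ∧ rest = rest' := by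
  intro rest
  induction rest with
  | nil =>
      intro rest' hlen a a' h
      cases rest' with
      | nil =>
          simp [waux, show waux [] = [] from rfl] at h
          exact ⟨h, rfl⟩
      | cons => simp at hlen
  | cons b rest2 ih =>
      intro rest' hlen a a' h
      cases rest' with
      | nil => simp at hlen
      | cons b' rest2' =>
          simp only [waux, List.cons_append, List.append_assoc] at h
          obtain ⟨h1, h2⟩ := split_lemma _ _ _ _ h
          obtain ⟨h3, h4⟩ := ih rest2' (by simpa using hlen) b b' h2
          exact ⟨h1, by rw [h3, h4]⟩

lemma W_inj (d e : List ℕ) (hlen : d.length = e.length) (h : W d = W e) : d = e := by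
  cases d with
  | nil => cases e with
    | nil => rfl
    | cons => simp at hlen
  | cons a m => cases e with
    | nil => simp at hlen
    | cons a' m' =>
        obtain ⟨h1, h2⟩ := waux_inj m m' (by simpa using hlen) a a' h
        rw [h1, h2]

lemma Daux_length : ∀ (m : List ℕ) (prev : ℕ), (Daux prev m).length = m.length := by
  intro m
  induction m with
  | nil => intro prev; rfl
  | cons a rest ih => intro prev; simp [Daux, ih]

lemma D_length (m : List ℕ) : (D m).length = m.length := by
  cases m with
  | nil => rfl
  | cons a rest => simp [D, Daux_length]

lemma Daux_getD : ∀ (m : List ℕ) (prev j : ℕ), j < m.length →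
    (Daux prev m).getD j 0 =
      m.getD j 0 - (if j = 0 then prev else m.getD (j - 1) 0) := by
  intro m
  induction m with
  | nil => intro prev j h; simp at h
  | cons a rest ih =>
      intro prev j h
      cases j with
      | zero => simp [Daux]
      | succ k =>
          have hk : k < rest.length := by simpa using h
          simp only [Daux, List.getD_cons_succ]
          rw [ih a k hk]
          cases k with
          | zero => simp
          | succ k' => simp [List.getD_cons_succ]

lemma D_getD (m : List ℕ) (j : ℕ) (h : j < m.length) :
    (D m).getD j 0 = if j = 0 then m.getD 0 0 - 1 else m.getD j 0 - m.getD (j - 1) 0 := by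
  cases m with
  | nil => simp at h
  | cons a rest =>
      cases j with
      | zero => simp [D]
      | succ k =>
          have hk : k < rest.length := by simpa using h
          simp only [D, List.getD_cons_succ]
          rw [Daux_getD rest a k hk]
          cases k with
          | zero => simp
          | succ k' => simp [List.getD_cons_succ]

end PalAux

namespace PalAux

lemma getD_reverse (m : List ℕ) (j : ℕ) (h : j < m.length) :
    m.reverse.getD j 0 = m.getD (m.length - 1 - j) 0 := by
  rw [List.getD_eq_getElem _ _ (show j < m.reverse.length by simpa using h),
      List.getD_eq_getElem _ _ (show m.length - 1 - j < m.length by omega)]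
  simp [List.getElem_reverse]

end PalAux

/-- a partition `λ = (λ₁ ≥ … ≥ λ_r > 0)` is a palindrome partition
(`B(λ)` equals its reversal) iff `λᵢ + λ_{r+2-i} = λ₁ + 1` for all `2 ≤ i ≤ r`. -/
theorem palindromePaper_stmt2 (l : List ℕ) (hl : IsPartition l) (hne : l ≠ []) :
    partitionWord l = (partitionWord l).reverse ↔
      ∀ i : ℕ, 2 ≤ i → i ≤ l.length →
        l.getD (i - 1) 0 + l.getD (l.length + 2 - i - 1) 0 = l.headI + 1 := by
  obtain ⟨hsort, hpos⟩ := hl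
  have hr1 : 1 ≤ l.length := List.length_pos_iff.mpr hne
  set r := l.length with hr
  have hmono : ∀ p q : ℕ, p ≤ q → q < r → l.getD q 0 ≤ l.getD p 0 := by
    intro p q hpq hq
    rcases eq_or_lt_of_le hpq with h | h
    · rw [h]
    · have hp : p < r := lt_trans h hq
      rw [List.getD_eq_getElem _ _ (show q < l.length by omega),
          List.getD_eq_getElem _ _ (show p < l.length by omega)]
      exact (List.pairwise_iff_getElem.mp hsort) p q (by omega) (by omega) h
  have hposD : ∀ p : ℕ, p < r → 0 < l.getD p 0 := by
    intro p hp
    rw [List.getD_eq_getElem _ _ (show p < l.length by omega)]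
    exact hpos _ (List.getElem_mem _)
  have hhead : l.headI = l.getD 0 0 := by
    cases l with
    | nil => simp at hne
    | cons a t => rfl
  have hrevD : ∀ j, j < r → l.reverse.getD j 0 = l.getD (r - 1 - j) 0 := by
    intro j hj
    rw [PalAux.getD_reverse l j (by omega)]
  set d := PalAux.D l.reverse with hd
  have hdlen : d.length = r := by rw [hd, PalAux.D_length, List.length_reverse]
  have hd0 : d.getD 0 0 = l.getD (r - 1) 0 - 1 := by
    rw [hd, PalAux.D_getD _ _ (show 0 < l.reverse.length by
      simp only [List.length_reverse]; omega)]
    rw [hrevD 0 (by omega)]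
    simp
  have hdj : ∀ j, 1 ≤ j → j < r →
      d.getD j 0 = l.getD (r - 1 - j) 0 - l.getD (r - j) 0 := by
    intro j h1 h2
    rw [hd, PalAux.D_getD _ _ (show j < l.reverse.length by
      simp only [List.length_reverse]; omega)]
    rw [if_neg (by omega), hrevD j h2, hrevD (j - 1) (by omega)]
    congr 2
    omega
  have step1 : (partitionWord l = (partitionWord l).reverse) ↔ d = d.reverse := by
    rw [PalAux.partitionWord_eq, ← hd, PalAux.W_reverse]
    constructor
    · exact fun h => PalAux.W_inj _ _ (by simp) h
    · intro h; rw [← h]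
  have step2 : (d = d.reverse) ↔ ∀ j, j < r → d.getD j 0 = d.getD (r - 1 - j) 0 := by
    constructor
    · intro h j hj
      conv_lhs => rw [h]
      rw [PalAux.getD_reverse d j (by omega), hdlen]
    · intro h
      apply List.ext_getElem (by simp)
      intro i h1 h2
      rw [List.getElem_reverse]
      have h3 := h i (by omega)
      rw [List.getD_eq_getElem _ _ (show i < d.length by omega),
          List.getD_eq_getElem _ _ (show r - 1 - i < d.length by omega)] at h3
      simp only [hdlen]
      exact h3
  rw [step1, step2]
  constructor
  · intro h i hi2 hir
    have key : ∀ k : ℕ, k + 2 ≤ r →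
        l.getD (k + 1) 0 + l.getD (r - 1 - k) 0 = l.getD 0 0 + 1 := by
      intro k
      induction k with
      | zero =>
          intro hk
          have h0 := h 0 (by omega)
          simp only [Nat.sub_zero] at h0
          rw [hd0, hdj (r - 1) (by omega) (by omega)] at h0
          have b1 : l.getD (r - 1 - (r - 1)) 0 = l.getD 0 0 := by congr 1 <;> omega
          have b2 : l.getD (r - (r - 1)) 0 = l.getD 1 0 := by congr 1 <;> omega
          have b3 : l.getD (r - 1 - 0) 0 = l.getD (r - 1) 0 := by congr 1 <;> omega
          have b4 : l.getD (0 + 1) 0 = l.getD 1 0 := by norm_num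
          have m1 := hmono 0 1 (by omega) (by omega)
          have m2 := hposD (r - 1) (by omega)
          have m3 := hmono 1 (r - 1) (by omega) (by omega)
          omega
      | succ k ih =>
          intro hk
          have ihh := ih (by omega)
          have hj := h (k + 1) (by omega)
          rw [hdj (k + 1) (by omega) (by omega),
              hdj (r - 1 - (k + 1)) (by omega) (by omega)] at hj
          have b1 : l.getD (r - 1 - (r - 1 - (k + 1))) 0 = l.getD (k + 1) 0 := by
            congr 1; omega
          have b2 : l.getD (r - (r - 1 - (k + 1))) 0 = l.getD (k + 2) 0 := by
            congr 1; omega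
          have b3 : l.getD (r - (k + 1)) 0 = l.getD (r - 1 - k) 0 := by congr 1 <;> omega
          have b4 : l.getD (r - 1 - (k + 1)) 0 = l.getD (r - 2 - k) 0 := by congr 1 <;> omega
          have m1 := hmono (r - 2 - k) (r - 1 - k) (by omega) (by omega)
          have m2 := hmono (k + 1) (k + 2) (by omega) (by omega)
          have b5 : l.getD (k + 1 + 1) 0 = l.getD (k + 2) 0 := by congr 1 <;> omega
          omega
    have hk := key (i - 2) (by omega)
    have b1 : l.getD (i - 2 + 1) 0 = l.getD (i - 1) 0 := by congr 1 <;> omega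
    have b2 : l.getD (r - 1 - (i - 2)) 0 = l.getD (r + 2 - i - 1) 0 := by congr 1 <;> omega
    rw [hhead]
    omega
  · intro h j hj
    rcases Nat.lt_or_ge r 2 with hr2 | hr2
    · have : j = 0 := by omega
      subst this
      have : r - 1 - 0 = 0 := by omega
      rw [this]
    · have h2 := h 2 (by omega) (by omega)
      rw [hhead] at h2
      have b0 : l.getD (2 - 1) 0 = l.getD 1 0 := by norm_num
      have b0' : l.getD (r + 2 - 2 - 1) 0 = l.getD (r - 1) 0 := by congr 1 <;> omega
      rcases Nat.eq_zero_or_pos j with hj0 | hj1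
      · subst hj0
        rw [hd0, hdj (r - 1 - 0) (by omega) (by omega)]
        have b1 : l.getD (r - 1 - (r - 1 - 0)) 0 = l.getD 0 0 := by congr 1 <;> omega
        have b2 : l.getD (r - (r - 1 - 0)) 0 = l.getD 1 0 := by congr 1 <;> omega
        have m1 := hmono 0 1 (by omega) (by omega)
        have m2 := hposD (r - 1) (by omega)
        omega
      · rcases Nat.lt_or_ge j (r - 1) with hjlt | hjge
        · -- 1 ≤ j ≤ r - 2
          rw [hdj j (by omega) (by omega), hdj (r - 1 - j) (by omega) (by omega)]
          have hj1' := h (j + 1) (by omega) (by omega)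
          have hj2' := h (j + 2) (by omega) (by omega)
          rw [hhead] at hj1' hj2'
          have c1 : l.getD (j + 1 - 1) 0 = l.getD j 0 := by congr 1 <;> omega
          have c2 : l.getD (r + 2 - (j + 1) - 1) 0 = l.getD (r - j) 0 := by congr 1 <;> omega
          have c3 : l.getD (j + 2 - 1) 0 = l.getD (j + 1) 0 := by congr 1 <;> omega
          have c4 : l.getD (r + 2 - (j + 2) - 1) 0 = l.getD (r - 1 - j) 0 := by
            congr 1; omega
          have c5 : l.getD (r - 1 - (r - 1 - j)) 0 = l.getD j 0 := by congr 1 <;> omega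
          have c6 : l.getD (r - (r - 1 - j)) 0 = l.getD (j + 1) 0 := by congr 1 <;> omega
          have m1 := hmono (r - 1 - j) (r - j) (by omega) (by omega)
          have m2 := hmono j (j + 1) (by omega) (by omega)
          omega
        · -- j = r - 1
          have : j = r - 1 := by omega
          subst this
          rw [hdj (r - 1) (by omega) (by omega),
            show r - 1 - (r - 1) = 0 by omega, hd0]
          have b1 : l.getD (r - 1 - (r - 1)) 0 = l.getD 0 0 := by congr 1 <;> omega
          have b2 : l.getD (r - (r - 1)) 0 = l.getD 1 0 := by congr 1 <;> omega
          have m1 := hmono 0 1 (by omega) (by omega)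
          have m2 := hposD (r - 1) (by omega)
          omega
end

section
/- For all nonnegative integers k and l, the number of partitions μ fitting inside a 2k × 2l rectangle (at most 2k parts, each part at most 2l) that are equal to the 180°-rotation of their complement in that rectangle — i.e. satisfying μ_i + μ_{2k+1−i} = 2l for all 1 ≤ i ≤ 2k, where μ_j = 0 for j greater than the number of parts — equals the binomial coefficient C(k+l, k). (In particular any such μ has exactly 2kl boxes.) -/
namespace Palin6

lemma sm_key {k m : ℕ} (f : Fin k → Fin m) (hf : StrictMono f) :
    ∀ (d : ℕ) (i j : Fin k), (j : ℕ) = (i : ℕ) + d → (j : ℕ) + (f i : ℕ) ≤ (i : ℕ) + (f j : ℕ) := by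
  intro d
  induction d with
  | zero => intro i j h; have : i = j := Fin.ext (by omega); subst this; omega
  | succ d ih =>
    intro i j h
    have hj' : (i : ℕ) + d < k := by have := j.isLt; omega
    have h1 := ih i ⟨(i : ℕ) + d, hj'⟩ rfl
    have h2 : f ⟨(i : ℕ) + d, hj'⟩ < f j := hf (by simp [Fin.lt_def]; omega)
    rw [Fin.lt_def] at h2
    simp at h1 ⊢
    omega

lemma sm_key' {k m : ℕ} (f : Fin k → Fin m) (hf : StrictMono f) {i j : Fin k} (hij : i ≤ j) :
    (j : ℕ) + (f i : ℕ) ≤ (i : ℕ) + (f j : ℕ) :=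
  sm_key f hf ((j : ℕ) - (i : ℕ)) i j (by rw [Fin.le_def] at hij; omega)

abbrev TypeA (k l : ℕ) := {g : Fin k → ℕ //
  (∀ i j : Fin k, i ≤ j → g j ≤ g i) ∧ ∀ i, l ≤ g i ∧ g i ≤ 2 * l}
abbrev TypeB (k l : ℕ) := {s : Finset (Fin (k + l)) // s.card = k}

def restrictF (k l : ℕ) (μ : Fin (2 * k) → ℕ) : Fin k → ℕ :=
  fun i => μ ⟨(i : ℕ), by have := i.isLt; omega⟩

def extendF (k l : ℕ) (g : Fin k → ℕ) : Fin (2 * k) → ℕ :=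
  fun i => if h : (i : ℕ) < k then g ⟨(i : ℕ), h⟩
    else 2 * l - g ⟨2 * k - 1 - (i : ℕ), by have := i.isLt; omega⟩

lemma extendF_lt' {k l : ℕ} (g : Fin k → ℕ) (i : Fin (2 * k)) (h : (i : ℕ) < k)
    (j : Fin k) (hj : (j : ℕ) = (i : ℕ)) : extendF k l g i = g j := by
  rw [extendF, dif_pos h]
  congr 1
  exact Fin.ext hj.symm

lemma extendF_ge' {k l : ℕ} (g : Fin k → ℕ) (i : Fin (2 * k)) (h : ¬ (i : ℕ) < k)
    (j : Fin k) (hj : (j : ℕ) = 2 * k - 1 - (i : ℕ)) : extendF k l g i = 2 * l - g j := by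
  rw [extendF, dif_neg h]
  congr 2
  exact Fin.ext hj.symm

lemma rev_val {n : ℕ} (i : Fin n) : (i.rev : ℕ) = n - 1 - (i : ℕ) := by
  rw [Fin.val_rev]; have := i.isLt; omega

lemma restrictF_eq {k l : ℕ} (μ : Fin (2 * k) → ℕ) (j : Fin k) (i : Fin (2 * k))
    (h : (j : ℕ) = (i : ℕ)) : restrictF k l μ j = μ i := by
  rw [restrictF]
  congr 1
  exact Fin.ext h

set_option maxHeartbeats 1000000 in
def equivA (k l : ℕ) :
    {μ : Fin (2 * k) → ℕ | (∀ i j : Fin (2 * k), i ≤ j → μ j ≤ μ i) ∧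
        (∀ i, μ i ≤ 2 * l) ∧
        ∀ i : Fin (2 * k), μ i + μ i.rev = 2 * l} ≃ TypeA k l where
  toFun μ := ⟨restrictF k l μ.1, by
    obtain ⟨μ, hmono, hub, hc⟩ := μ
    dsimp only
    refine ⟨fun i j hij => hmono _ _ hij, fun i => ?_⟩
    have hik := i.isLt
    set i' : Fin (2 * k) := ⟨(i : ℕ), by omega⟩ with hi'
    have hr1 : restrictF k l μ i = μ i' := restrictF_eq μ i i' rfl
    have hc' := hc i'
    have hrev : ((i'.rev : Fin (2 * k)) : ℕ) = 2 * k - 1 - (i : ℕ) := by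
      rw [rev_val]
    have hle : μ i'.rev ≤ μ i' := hmono i' i'.rev
      (by rw [Fin.le_def, hrev]; show (i : ℕ) ≤ _; omega)
    have := hub i'
    omega⟩
  invFun g := ⟨extendF k l g.1, by
    obtain ⟨g, hmono, hbd⟩ := g
    dsimp only
    have hmk : ∀ (a b : ℕ) (ha : a < k) (hb : b < k), a ≤ b → g ⟨b, hb⟩ ≤ g ⟨a, ha⟩ :=
      fun a b ha hb h => hmono ⟨a, ha⟩ ⟨b, hb⟩ h
    refine ⟨fun i j hij => ?_, fun i => ?_, fun i => ?_⟩
    · have hi := i.isLt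
      have hj := j.isLt
      rw [Fin.le_def] at hij
      rcases lt_or_ge (i : ℕ) k with h1 | h1 <;> rcases lt_or_ge (j : ℕ) k with h2 | h2
      · rw [extendF_lt' g i h1 ⟨(i : ℕ), h1⟩ rfl, extendF_lt' g j h2 ⟨(j : ℕ), h2⟩ rfl]
        exact hmk _ _ _ _ hij
      · rw [extendF_lt' g i h1 ⟨(i : ℕ), h1⟩ rfl,
          extendF_ge' g j (by omega) ⟨2 * k - 1 - (j : ℕ), by omega⟩ rfl]
        have := (hbd ⟨(i : ℕ), h1⟩).1
        have := (hbd ⟨2 * k - 1 - (j : ℕ), by omega⟩).1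
        omega
      · omega
      · rw [extendF_ge' g i (by omega) ⟨2 * k - 1 - (i : ℕ), by omega⟩ rfl,
          extendF_ge' g j (by omega) ⟨2 * k - 1 - (j : ℕ), by omega⟩ rfl]
        have h3 : g ⟨2 * k - 1 - (i : ℕ), by omega⟩ ≤ g ⟨2 * k - 1 - (j : ℕ), by omega⟩ :=
          hmk _ _ _ _ (by omega)
        have := (hbd ⟨2 * k - 1 - (i : ℕ), by omega⟩).2
        omega
    · have hi := i.isLt
      rcases lt_or_ge (i : ℕ) k with h | h
      · rw [extendF_lt' g i h ⟨(i : ℕ), h⟩ rfl]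
        exact (hbd _).2
      · rw [extendF_ge' g i (by omega) ⟨2 * k - 1 - (i : ℕ), by omega⟩ rfl]
        omega
    · have hik := i.isLt
      have hrev : ((i.rev : Fin (2 * k)) : ℕ) = 2 * k - 1 - (i : ℕ) := rev_val i
      rcases lt_or_ge (i : ℕ) k with h | h
      · rw [extendF_lt' g i h ⟨(i : ℕ), h⟩ rfl,
          extendF_ge' g i.rev (by omega) ⟨(i : ℕ), h⟩
            (by show (i : ℕ) = 2 * k - 1 - ((i.rev : Fin (2 * k)) : ℕ); omega)]
        have := (hbd ⟨(i : ℕ), h⟩).2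
        omega
      · rw [extendF_ge' g i (by omega) ⟨2 * k - 1 - (i : ℕ), by omega⟩ rfl,
          extendF_lt' g i.rev (by omega) ⟨2 * k - 1 - (i : ℕ), by omega⟩
            (by show 2 * k - 1 - (i : ℕ) = ((i.rev : Fin (2 * k)) : ℕ); omega)]
        have := (hbd ⟨2 * k - 1 - (i : ℕ), by omega⟩).2
        omega⟩
  left_inv := by
    rintro ⟨μ, hmono, hub, hc⟩
    apply Subtype.ext
    funext i
    show extendF k l (restrictF k l μ) i = μ i
    have hi := i.isLt
    rcases lt_or_ge (i : ℕ) k with h | h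
    · rw [extendF_lt' _ i h ⟨(i : ℕ), h⟩ rfl, restrictF_eq μ ⟨(i : ℕ), h⟩ i rfl]
    · set j : Fin (2 * k) := ⟨2 * k - 1 - (i : ℕ), by omega⟩ with hj
      rw [extendF_ge' _ i (by omega) ⟨2 * k - 1 - (i : ℕ), by omega⟩ rfl,
        restrictF_eq μ ⟨2 * k - 1 - (i : ℕ), by omega⟩ j rfl]
      have hrevj : j.rev = i := Fin.ext (by rw [rev_val]; show 2 * k - 1 - _ = _; simp [hj]; omega)
      have h1 := hc j
      rw [hrevj] at h1
      have h2 := hub j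
      omega
  right_inv := by
    rintro ⟨g, hg⟩
    apply Subtype.ext
    funext i
    show restrictF k l (extendF k l g) i = g i
    rw [restrictF_eq (extendF k l g) i ⟨(i : ℕ), by have := i.isLt; omega⟩ rfl,
      extendF_lt' g _ i.isLt i rfl]

def vmap (k l : ℕ) (g : TypeA k l) : Fin k → Fin (k + l) :=
  fun i => ⟨2 * l - g.1 i + (i : ℕ), by have := (g.2.2 i).1; have := i.isLt; omega⟩

lemma vmap_val (k l : ℕ) (g : TypeA k l) (i : Fin k) :
    (vmap k l g i : ℕ) = 2 * l - g.1 i + (i : ℕ) := rfl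

lemma vmap_strictMono (k l : ℕ) (g : TypeA k l) : StrictMono (vmap k l g) := by
  intro i j hij
  have h1 := g.2.1 i j hij.le
  have h2 := (g.2.2 i).2
  rw [Fin.lt_def] at hij ⊢
  rw [vmap_val, vmap_val]
  omega

lemma f_bounds {k l : ℕ} (s : Finset (Fin (k + l))) (hc : s.card = k) (i : Fin k) :
    (i : ℕ) ≤ (s.orderEmbOfFin hc i : ℕ) ∧ (s.orderEmbOfFin hc i : ℕ) ≤ l + (i : ℕ) := by
  set f := s.orderEmbOfFin hc with hf
  have hsm : StrictMono f := f.strictMono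
  have h0 : (0 : ℕ) < k := by have := i.isLt; omega
  have ha := sm_key' f hsm (i := ⟨0, h0⟩) (j := i) (by rw [Fin.le_def]; exact Nat.zero_le _)
  have hi := i.isLt
  have hb := sm_key' f hsm (i := i) (j := ⟨k - 1, by omega⟩)
    (by rw [Fin.le_def]; show (i : ℕ) ≤ k - 1; omega)
  have hcc := (f ⟨k - 1, by omega⟩).isLt
  simp at ha hb
  omega

def equivB (k l : ℕ) : TypeA k l ≃ TypeB k l where
  toFun g := ⟨Finset.image (vmap k l g) Finset.univ, by
    rw [Finset.card_image_of_injective _ (vmap_strictMono k l g).injective, Finset.card_univ,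
      Fintype.card_fin]⟩
  invFun s := ⟨fun i => 2 * l + (i : ℕ) - ((s.1.orderEmbOfFin s.2 i : Fin (k + l)) : ℕ), by
    refine ⟨fun i j hij => ?_, fun i => ?_⟩
    · show 2 * l + (j : ℕ) - ((s.1.orderEmbOfFin s.2 j : Fin (k + l)) : ℕ)
        ≤ 2 * l + (i : ℕ) - ((s.1.orderEmbOfFin s.2 i : Fin (k + l)) : ℕ)
      have h1 := sm_key' _ (s.1.orderEmbOfFin s.2).strictMono hij
      have h2 := (f_bounds s.1 s.2 i).1
      have h3 := (f_bounds s.1 s.2 j).2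
      rw [Fin.le_def] at hij
      omega
    · show l ≤ 2 * l + (i : ℕ) - ((s.1.orderEmbOfFin s.2 i : Fin (k + l)) : ℕ)
        ∧ 2 * l + (i : ℕ) - ((s.1.orderEmbOfFin s.2 i : Fin (k + l)) : ℕ) ≤ 2 * l
      have h1 := (f_bounds s.1 s.2 i).1
      have h2 := (f_bounds s.1 s.2 i).2
      have := i.isLt
      omega⟩
  left_inv := by
    rintro g
    apply Subtype.ext
    funext i
    dsimp only
    generalize_proofs hp
    have hfeq : (Finset.image (vmap k l g) Finset.univ).orderEmbOfFin hp
        = OrderEmbedding.ofStrictMono _ (vmap_strictMono k l g) :=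
      (Finset.orderEmbOfFin_unique' hp
        (fun x => Finset.mem_image_of_mem _ (Finset.mem_univ x))).symm
    rw [hfeq]
    have hv : ((OrderEmbedding.ofStrictMono _ (vmap_strictMono k l g)) i : ℕ)
        = 2 * l - g.1 i + (i : ℕ) := rfl
    rw [hv]
    have := (g.2.2 i).2
    omega
  right_inv := by
    rintro ⟨s, hcard⟩
    apply Subtype.ext
    dsimp only
    have hveq : ∀ (G : TypeA k l), (∀ i : Fin k, G.1 i
          = 2 * l + (i : ℕ) - ((s.orderEmbOfFin hcard i : Fin (k + l)) : ℕ)) →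
        Finset.image (vmap k l G) Finset.univ = s := by
      intro G hG
      have himg : ∀ i : Fin k, vmap k l G i = s.orderEmbOfFin hcard i := by
        intro i
        apply Fin.ext
        rw [vmap_val, hG i]
        have h1 := (f_bounds s hcard i).1
        have h2 := (f_bounds s hcard i).2
        omega
      calc Finset.image (vmap k l G) Finset.univ
          = Finset.image (fun i => s.orderEmbOfFin hcard i) Finset.univ :=
            Finset.image_congr (fun i _ => himg i)
        _ = s := by
            apply Finset.eq_of_subset_of_card_le
            · intro x hx
              simp only [Finset.mem_image] at hx
              obtain ⟨i, _, rfl⟩ := hx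
              exact Finset.orderEmbOfFin_mem s hcard i
            · rw [Finset.card_image_of_injective _ (s.orderEmbOfFin hcard).strictMono.injective,
                Finset.card_univ, Fintype.card_fin, hcard]
    exact hveq _ (fun i => rfl)

end Palin6



/-- the number of partitions `μ` inside a `2k × 2l` rectangle
(at most `2k` parts, each at most `2l`, encoded as an antitone function
`Fin (2k) → ℕ`) equal to the 180°-rotation of their complement in the
rectangle, i.e. with `μ i + μ (rev i) = 2l` for all `i`, is `C(k+l, k)`. -/
theorem palindromePaper_stmt6 (k l : ℕ) :
    {μ : Fin (2 * k) → ℕ | (∀ i j : Fin (2 * k), i ≤ j → μ j ≤ μ i) ∧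
        (∀ i, μ i ≤ 2 * l) ∧
        ∀ i : Fin (2 * k), μ i + μ i.rev = 2 * l}.ncard
      = (k + l).choose k := by
  rw [← Nat.card_coe_set_eq]
  rw [Nat.card_congr ((Palin6.equivA k l).trans (Palin6.equivB k l))]
  rw [Nat.card_eq_fintype_card, Fintype.card_finset_len, Fintype.card_fin]
end

section
/- For all nonnegative integers k and l, the number of partitions μ fitting inside a (2k+1) × 2l rectangle (at most 2k+1 parts, each part at most 2l) that are equal to the 180°-rotation of their complement in that rectangle — i.e. satisfying μ_i + μ_{2k+2−i} = 2l for all 1 ≤ i ≤ 2k+1, where μ_j = 0 for j greater than the number of parts — equals the binomial coefficient C(k+l, k). (Any such μ has middle row μ_{k+1} = l and exactly (2k+1)l boxes.) -/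
lemma sm_add_le {n m : ℕ} {g : Fin n → Fin m} (hg : StrictMono g) :
    ∀ (t : ℕ) (i j : Fin n), (i : ℕ) + t = (j : ℕ) → (g i : ℕ) + t ≤ g j := by
  intro t
  induction t with
  | zero =>
    intro i j h
    have : i = j := Fin.ext (by omega)
    simp [this]
  | succ t ih =>
    intro i j h
    have hjlt : (i : ℕ) + t < n := by omega
    have h1 := ih i ⟨(i : ℕ) + t, hjlt⟩ rfl
    have h2 : (⟨(i : ℕ) + t, hjlt⟩ : Fin n) < j := by
      simp [Fin.lt_def]; omega
    have h3 := hg h2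
    rw [Fin.lt_def] at h3
    omega

/-- Strictly monotone maps `Fin k → α` biject with `k`-subsets. -/
noncomputable def smEquivFinset (k : ℕ) (α : Type*) [Fintype α] [LinearOrder α] :
    {g : Fin k → α // StrictMono g} ≃ {s : Finset α // s.card = k} := by
  apply Equiv.ofBijective (fun g => ⟨Finset.image g.1 Finset.univ, by
    rw [Finset.card_image_of_injective _ g.2.injective, Finset.card_univ, Fintype.card_fin]⟩)
  constructor
  · rintro ⟨g, hg⟩ ⟨g', hg'⟩ h
    simp only [Subtype.mk.injEq] at h ⊢
    have hc : (Finset.image g Finset.univ).card = k := by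
      rw [Finset.card_image_of_injective _ hg.injective, Finset.card_univ, Fintype.card_fin]
    have e1 := Finset.orderEmbOfFin_unique hc
      (fun x => Finset.mem_image_of_mem g (Finset.mem_univ x)) hg
    have e2 := Finset.orderEmbOfFin_unique hc
      (fun x => h ▸ Finset.mem_image_of_mem g' (Finset.mem_univ x)) hg'
    funext x
    exact (congrFun e1 x).trans (congrFun e2 x).symm
  · rintro ⟨s, hs⟩
    refine ⟨⟨s.orderEmbOfFin hs, (s.orderEmbOfFin hs).strictMono⟩, ?_⟩
    simp only [Subtype.mk.injEq]
    apply Finset.coe_injective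
    rw [Finset.coe_image, Finset.coe_univ, Set.image_univ, Finset.range_orderEmbOfFin]

/-- The predicate on `μ`. -/
def SCProp (k l : ℕ) (μ : Fin (2 * k + 1) → ℕ) : Prop :=
  (∀ i j : Fin (2 * k + 1), i ≤ j → μ j ≤ μ i) ∧
    (∀ i, μ i ≤ 2 * l) ∧ ∀ i : Fin (2 * k + 1), μ i + μ i.rev = 2 * l

lemma rev_val {k : ℕ} (i : Fin (2 * k + 1)) : (i.rev : ℕ) = 2 * k - (i : ℕ) := by
  rw [Fin.val_rev]; omega

lemma mid_eq {k l : ℕ} {μ : Fin (2 * k + 1) → ℕ} (h : SCProp k l μ) :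
    μ ⟨k, by omega⟩ = l := by
  have hre : (⟨k, by omega⟩ : Fin (2 * k + 1)).rev = ⟨k, by omega⟩ :=
    Fin.ext (by simp [rev_val]; omega)
  have h3 := h.2.2 ⟨k, by omega⟩
  rw [hre] at h3
  omega

/-- value of the forward map -/
def fwdVal (k l : ℕ) (μ : Fin (2 * k + 1) → ℕ) (i : Fin k) : ℕ :=
  2 * l + (i : ℕ) - μ ⟨(i : ℕ), by omega⟩

lemma fwdVal_lt {k l : ℕ} {μ : Fin (2 * k + 1) → ℕ} (h : SCProp k l μ) (i : Fin k) :
    fwdVal k l μ i < k + l := by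
  have hge : l ≤ μ ⟨(i : ℕ), by omega⟩ := by
    have := h.1 ⟨(i : ℕ), by omega⟩ ⟨k, by omega⟩ (Fin.mk_le_mk.mpr (by omega))
    rw [mid_eq h] at this
    exact this
  have := i.isLt
  unfold fwdVal
  omega

lemma fwdVal_sm {k l : ℕ} {μ : Fin (2 * k + 1) → ℕ} (h : SCProp k l μ)
    {i j : Fin k} (hij : i < j) : fwdVal k l μ i < fwdVal k l μ j := by
  rw [Fin.lt_def] at hij
  have hji := h.1 ⟨(i : ℕ), by omega⟩ ⟨(j : ℕ), by omega⟩ (Fin.mk_le_mk.mpr (by omega))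
  have hb := h.2.1 ⟨(i : ℕ), by omega⟩
  unfold fwdVal
  omega

/-- The forward map. -/
def fwdMap (k l : ℕ) (μ : {μ : Fin (2 * k + 1) → ℕ // SCProp k l μ}) :
    {g : Fin k → Fin (k + l) // StrictMono g} :=
  ⟨fun i => ⟨fwdVal k l μ.1 i, fwdVal_lt μ.2 i⟩,
    fun _ _ hij => by simpa [Fin.lt_def] using fwdVal_sm μ.2 hij⟩

lemma fwd_inj (k l : ℕ) : Function.Injective (fwdMap k l) := by
  rintro ⟨μ, hμ⟩ ⟨ν, hν⟩ h
  simp only [fwdMap, Subtype.mk.injEq] at h ⊢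
  have hv : ∀ i : Fin k, fwdVal k l μ i = fwdVal k l ν i := by
    intro i
    exact congrArg Fin.val (congrFun (congrArg Subtype.val h) i)
  funext i
  rcases Nat.lt_trichotomy (i : ℕ) k with hik | hik | hik
  · have h0 := hv ⟨(i : ℕ), hik⟩
    unfold fwdVal at h0
    have hbi := hμ.2.1 ⟨(i : ℕ), by omega⟩
    have hbi' := hν.2.1 ⟨(i : ℕ), by omega⟩
    have hie : (⟨((⟨(i : ℕ), hik⟩ : Fin k) : ℕ), by omega⟩ : Fin (2 * k + 1)) = i :=
      Fin.ext rfl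
    rw [hie] at h0 hbi hbi'
    omega
  · have hr : i = ⟨k, by omega⟩ := Fin.ext hik
    rw [hr, mid_eq hμ, mid_eq hν]
  · have e1 := hμ.2.2 i.rev
    have e2 := hν.2.2 i.rev
    rw [Fin.rev_rev] at e1 e2
    have hrk : (i.rev : ℕ) < k := by rw [rev_val]; omega
    have h0 := hv ⟨(i.rev : ℕ), hrk⟩
    unfold fwdVal at h0
    have hie : (⟨((⟨(i.rev : ℕ), hrk⟩ : Fin k) : ℕ), by omega⟩ : Fin (2 * k + 1)) = i.rev :=
      Fin.ext rfl
    rw [hie] at h0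
    have hb1 := hμ.2.1 i.rev
    have hb2 := hν.2.1 i.rev
    omega

lemma fwd_surj (k l : ℕ) : Function.Surjective (fwdMap k l) := by
  rintro ⟨g, hg⟩
  have hub : ∀ i : Fin k, (g i : ℕ) ≤ l + (i : ℕ) := by
    intro i
    have hk : 0 < k := i.pos
    have h1 := sm_add_le hg (k - 1 - (i : ℕ)) i ⟨k - 1, by omega⟩ (by simp; omega)
    have h2 := (g ⟨k - 1, by omega⟩).isLt
    omega
  have hlb : ∀ i : Fin k, (i : ℕ) ≤ g i := by
    intro i
    have hk : 0 < k := i.pos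
    have := sm_add_le hg (i : ℕ) ⟨0, hk⟩ i (by simp)
    omega
  have hmono : ∀ i j : Fin k, (i : ℕ) ≤ (j : ℕ) →
      (g i : ℕ) + ((j : ℕ) - (i : ℕ)) ≤ g j := fun i j hij =>
    sm_add_le hg ((j : ℕ) - (i : ℕ)) i j (by omega)
  set μ : Fin (2 * k + 1) → ℕ := fun i =>
    if h : (i : ℕ) < k then 2 * l + (i : ℕ) - (g ⟨(i : ℕ), h⟩ : ℕ)
    else if h' : k < (i : ℕ) then (g ⟨2 * k - (i : ℕ), by omega⟩ : ℕ) - (2 * k - (i : ℕ))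
    else l with hμdef
  have hμ1 : ∀ (i : Fin (2 * k + 1)) (h : (i : ℕ) < k),
      μ i = 2 * l + (i : ℕ) - (g ⟨(i : ℕ), h⟩ : ℕ) := by
    intro i h; rw [hμdef]; simp only; rw [dif_pos h]
  have hμ2 : ∀ (i : Fin (2 * k + 1)), (i : ℕ) = k → μ i = l := by
    intro i h; rw [hμdef]; simp only; rw [dif_neg (by omega), dif_neg (by omega)]
  have hμ3 : ∀ (i : Fin (2 * k + 1)) (h : k < (i : ℕ)),
      μ i = (g ⟨2 * k - (i : ℕ), by omega⟩ : ℕ) - (2 * k - (i : ℕ)) := by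
    intro i h; rw [hμdef]; simp only; rw [dif_neg (by omega), dif_pos h]
  have hv1 : ∀ (i : Fin (2 * k + 1)) (h : (i : ℕ) < k), l ≤ μ i ∧ μ i ≤ 2 * l := by
    intro i h
    rw [hμ1 i h]
    have e1 := hub ⟨(i : ℕ), h⟩
    have e2 := hlb ⟨(i : ℕ), h⟩
    simp only at e1 e2
    omega
  have hv3 : ∀ (i : Fin (2 * k + 1)) (h : k < (i : ℕ)), μ i ≤ l := by
    intro i h
    rw [hμ3 i h]
    have e1 := hub ⟨2 * k - (i : ℕ), by omega⟩
    simp only at e1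
    omega
  have hμP : SCProp k l μ := by
    refine ⟨?_, ?_, ?_⟩
    · intro i j hij
      rw [Fin.le_def] at hij
      rcases Nat.lt_trichotomy (j : ℕ) k with hjk | hjk | hjk
      · have hik : (i : ℕ) < k := by omega
        rw [hμ1 i hik, hμ1 j hjk]
        have hm := hmono ⟨(i : ℕ), hik⟩ ⟨(j : ℕ), hjk⟩ hij
        have e1 := hub ⟨(i : ℕ), hik⟩
        have e2 := hlb ⟨(i : ℕ), hik⟩
        simp only at hm e1 e2
        omega
      · rcases Nat.lt_or_ge (i : ℕ) k with hik | hik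
        · rw [hμ2 j hjk]; exact (hv1 i hik).1
        · have hik' : (i : ℕ) = k := by omega
          rw [hμ2 i hik', hμ2 j hjk]
      · rcases Nat.lt_trichotomy (i : ℕ) k with hik | hik | hik
        · exact le_trans (hv3 j hjk) (hv1 i hik).1
        · rw [hμ2 i hik]; exact hv3 j hjk
        · rw [hμ3 i hik, hμ3 j hjk]
          have hm := hmono ⟨2 * k - (j : ℕ), by omega⟩ ⟨2 * k - (i : ℕ), by omega⟩
            (by simp only; omega)
          have e1 := hlb ⟨2 * k - (j : ℕ), by omega⟩
          simp only at hm e1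
          omega
    · intro i
      rcases Nat.lt_trichotomy (i : ℕ) k with hik | hik | hik
      · exact (hv1 i hik).2
      · rw [hμ2 i hik]; omega
      · have := hv3 i hik; omega
    · intro i
      rcases Nat.lt_trichotomy (i : ℕ) k with hik | hik | hik
      · have hr : k < (i.rev : ℕ) := by rw [rev_val]; omega
        rw [hμ1 i hik, hμ3 i.rev hr]
        have hie : (⟨2 * k - (i.rev : ℕ), by omega⟩ : Fin k) = ⟨(i : ℕ), hik⟩ :=
          Fin.ext (by simp only [rev_val]; omega)
        rw [hie]
        have e1 := hub ⟨(i : ℕ), hik⟩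
        have e2 := hlb ⟨(i : ℕ), hik⟩
        simp only at e1 e2
        have hrv := rev_val i
        have hil := i.isLt
        omega
      · have hr : (i.rev : ℕ) = k := by rw [rev_val]; omega
        rw [hμ2 i hik, hμ2 i.rev hr]; omega
      · have hr : (i.rev : ℕ) < k := by rw [rev_val]; omega
        rw [hμ3 i hik, hμ1 i.rev hr]
        have hie : (⟨2 * k - (i : ℕ), by omega⟩ : Fin k) = ⟨(i.rev : ℕ), hr⟩ :=
          Fin.ext (by simp only [rev_val])
        rw [hie]
        have e1 := hub ⟨(i.rev : ℕ), hr⟩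
        have e2 := hlb ⟨(i.rev : ℕ), hr⟩
        simp only at e1 e2
        have hrv := rev_val i
        have hil := i.isLt
        omega
  refine ⟨⟨μ, hμP⟩, ?_⟩
  simp only [fwdMap, Subtype.mk.injEq]
  apply Subtype.ext
  funext i
  apply Fin.ext
  simp only
  unfold fwdVal
  rw [hμ1 ⟨(i : ℕ), by omega⟩ (by simpa using i.isLt)]
  have hie : (⟨((⟨(i : ℕ), by omega⟩ : Fin (2 * k + 1)) : ℕ), by simpa using i.isLt⟩
      : Fin k) = i := Fin.ext rfl
  rw [hie]
  simp only [Fin.val_mk]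
  have e1 := hub i
  have e2 := hlb i
  omega

/-- the number of partitions `μ` inside a `(2k+1) × 2l` rectangle
(at most `2k+1` parts, each at most `2l`, encoded as an antitone function
`Fin (2k+1) → ℕ`) equal to the 180°-rotation of their complement in the
rectangle, i.e. with `μ i + μ (rev i) = 2l` for all `i`, is `C(k+l, k)`. -/
theorem palindromePaper_stmt7 (k l : ℕ) :
    {μ : Fin (2 * k + 1) → ℕ | (∀ i j : Fin (2 * k + 1), i ≤ j → μ j ≤ μ i) ∧
        (∀ i, μ i ≤ 2 * l) ∧
        ∀ i : Fin (2 * k + 1), μ i + μ i.rev = 2 * l}.ncard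
      = (k + l).choose k := by
  have hset : {μ : Fin (2 * k + 1) → ℕ | (∀ i j : Fin (2 * k + 1), i ≤ j → μ j ≤ μ i) ∧
      (∀ i, μ i ≤ 2 * l) ∧
      ∀ i : Fin (2 * k + 1), μ i + μ i.rev = 2 * l} = {μ | SCProp k l μ} := rfl
  rw [hset, ← Nat.card_coe_set_eq]
  have e : {μ : Fin (2 * k + 1) → ℕ // SCProp k l μ} ≃
      {s : Finset (Fin (k + l)) // s.card = k} :=
    (Equiv.ofBijective (fwdMap k l) ⟨fwd_inj k l, fwd_surj k l⟩).trans
      (smEquivFinset k (Fin (k + l)))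
  rw [show Nat.card ↥{μ | SCProp k l μ} = Nat.card {s : Finset (Fin (k + l)) // s.card = k}
      from Nat.card_congr ((Equiv.subtypeEquivRight fun μ => Iff.rfl).trans e),
    Nat.card_eq_fintype_card, Fintype.card_finset_len, Fintype.card_fin]
end

section
/- For every integer n ≥ 1, the number PP(n) of palindrome partitions of n equals Σ C(k+l, k), summed over all pairs of nonnegative integers (k, l) with 2kl + 2k + 2l + 1 = n, plus 2·Σ C(k+l, k), summed over all pairs of nonnegative integers (k, l) with 2kl + 2k + 3l + 2 = n. (This is the coefficient form of the generating function identity Σ_n PP(n) q^n = Σ_{k,l≥0} C(k+l,k) q^{2kl+2k+2l+1} + 2 Σ_{k,l≥0} C(k+l,k) q^{2kl+2k+3l+2}.) -/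
namespace PalAux

/-- inversions: pairs (true before false) -/
def inv : List Bool → ℕ
  | [] => 0
  | true :: t => t.count false + inv t
  | false :: t => inv t

lemma inv_append (u v : List Bool) :
    inv (u ++ v) = inv u + inv v + u.count true * v.count false := by
  induction u with
  | nil => simp [inv]
  | cons x t ih =>
    cases x <;> simp [inv, ih, List.count_cons, List.count_append] <;> ring

lemma count_true_add_count_false (u : List Bool) :
    u.count true + u.count false = u.length := by
  induction u with
  | nil => simp
  | cons x t ih => cases x <;> simp [List.count_cons] <;> omega

lemma count_reverse (u : List Bool) (b : Bool) : u.reverse.count b = u.count b := by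
  simp [List.count_reverse]

lemma inv_reverse (u : List Bool) :
    inv u + inv u.reverse = u.count true * u.count false := by
  induction u with
  | nil => simp [inv]
  | cons x t ih =>
    cases x <;>
      simp [inv, List.reverse_cons, inv_append, count_reverse, List.count_cons,
        Nat.add_mul, Nat.mul_add, Nat.mul_one, Nat.one_mul] <;>
      omega

/-- decode a word into the weakly increasing list of parts -/
def go : ℕ → List Bool → List ℕ
  | a, [] => [a]
  | a, true :: t => go (a+1) t
  | a, false :: t => a :: go a t

lemma go_ne_nil (a : ℕ) (w : List Bool) : go a w ≠ [] := by
  induction w generalizing a with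
  | nil => simp [go]
  | cons x t ih => cases x <;> simp [go] <;> exact ih _

lemma go_mem_le (a : ℕ) (w : List Bool) : ∀ x ∈ go a w, a ≤ x := by
  induction w generalizing a with
  | nil => intro x hx; simp [go] at hx; omega
  | cons b t ih =>
    intro x hx
    cases b with
    | true => exact le_trans (Nat.le_succ a) (ih (a+1) x (by simpa [go] using hx))
    | false =>
      simp only [go, List.mem_cons] at hx
      rcases hx with rfl | hx
      · exact le_refl x
      · exact ih a x hx

lemma go_sorted (a : ℕ) (w : List Bool) : List.Pairwise (· ≤ ·) (go a w) := by
  induction w generalizing a with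
  | nil => simp [go]
  | cons b t ih =>
    cases b with
    | true => exact ih (a+1)
    | false =>
      simp only [go]
      rw [List.pairwise_cons]
      exact ⟨go_mem_le a t, ih a⟩

lemma go_sum (a : ℕ) (w : List Bool) :
    (go a w).sum = a * (w.count false + 1) + inv w + w.count true := by
  induction w generalizing a with
  | nil => simp [go, inv]
  | cons b t ih =>
    cases b <;> simp [go, inv, List.count_cons, ih] <;> ring

lemma decode_encode (w : List Bool) : ∀ (a : ℕ) (c : ℕ) (rest : List ℕ),
    go a w = c :: rest → List.replicate (c - a) true ++ wordAux c rest = w := by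
  induction w with
  | nil =>
    intro a c rest h
    simp only [go, List.cons.injEq] at h
    obtain ⟨rfl, rfl⟩ := h
    simp [wordAux]
  | cons b t ih =>
    intro a c rest h
    cases b with
    | false =>
      simp only [go, List.cons.injEq] at h
      obtain ⟨rfl, rfl⟩ := h
      obtain ⟨c', rest', hgo⟩ := List.exists_cons_of_ne_nil (go_ne_nil a t)
      rw [hgo, Nat.sub_self, List.replicate_zero, List.nil_append]
      show false :: (List.replicate (c' - a) true ++ wordAux c' rest') = false :: t
      exact congrArg (List.cons false) (ih a c' rest' hgo)
    | true =>
      simp only [go] at h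
      have hc : a + 1 ≤ c := go_mem_le (a+1) t c (by rw [h]; exact List.mem_cons_self)
      have hrep : c - a = (c - (a+1)) + 1 := by omega
      rw [hrep, List.replicate_succ, List.cons_append]
      exact congrArg (List.cons true) (ih (a+1) c rest h)

lemma go_replicate (k a : ℕ) (s : List Bool) :
    go a (List.replicate k true ++ s) = go (a + k) s := by
  induction k generalizing a with
  | zero => simp
  | succ m ih => simp [List.replicate_succ, go, ih]; ring_nf

lemma encode_decode (rest : List ℕ) : ∀ a : ℕ, (∀ x ∈ rest, a ≤ x) →
    List.Pairwise (· ≤ ·) rest → go a (wordAux a rest) = a :: rest := by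
  induction rest with
  | nil => intro a _ _; simp [wordAux, go]
  | cons b t ih =>
    intro a hmem hsort
    have hab : a ≤ b := hmem b (List.mem_cons_self)
    simp only [wordAux, List.cons_append, go, List.append_eq]
    rw [go_replicate]
    have : a + (b - a) = b := by omega
    rw [this, ih b (fun x hx => (List.pairwise_cons.mp hsort).1 x hx)
      (List.pairwise_cons.mp hsort).2]

end PalAux

namespace PalAux

lemma partitionWord_decode (w : List Bool) :
    partitionWord ((go 1 w).reverse) = w := by
  obtain ⟨c, rest, hgo⟩ := List.exists_cons_of_ne_nil (go_ne_nil 1 w)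
  have hrev : ((go 1 w).reverse).reverse = c :: rest := by rw [List.reverse_reverse, hgo]
  simp only [partitionWord, hrev]
  exact decode_encode w 1 c rest hgo

lemma isPartition_decode (w : List Bool) : IsPartition ((go 1 w).reverse) := by
  constructor
  · exact List.pairwise_reverse.mpr (go_sorted 1 w)
  · intro x hx
    rw [List.mem_reverse] at hx
    exact go_mem_le 1 w x hx

lemma sum_decode (w : List Bool) :
    ((go 1 w).reverse).sum = inv w + w.length + 1 := by
  rw [List.sum_reverse, go_sum, one_mul, ← count_true_add_count_false w]
  ring

lemma go_encode (l : List ℕ) (hl : IsPartition l) (hne : l ≠ []) :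
    go 1 (partitionWord l) = l.reverse := by
  obtain ⟨a, rest, hrev⟩ := List.exists_cons_of_ne_nil (by
    simpa using hne : l.reverse ≠ [])
  have ha : 1 ≤ a := hl.2 a (by rw [← List.mem_reverse, hrev]; exact List.mem_cons_self)
  have hsorted : List.Pairwise (· ≤ ·) (a :: rest) := by
    rw [← hrev]
    exact List.pairwise_reverse.mpr hl.1
  simp only [partitionWord, hrev]
  rw [go_replicate]
  have h1 : 1 + (a - 1) = a := by omega
  rw [h1, encode_decode rest a (fun x hx => (List.pairwise_cons.mp hsorted).1 x hx)
    (List.pairwise_cons.mp hsorted).2]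

lemma PP_eq_words (n : ℕ) (hn : 1 ≤ n) :
    PP n = {w : List Bool | w = w.reverse ∧ inv w + w.length + 1 = n}.ncard := by
  rw [PP]
  rw [show {w : List Bool | w = w.reverse ∧ inv w + w.length + 1 = n}
      = partitionWord '' {l : List ℕ | IsPartition l ∧ l.sum = n ∧
        partitionWord l = (partitionWord l).reverse} from ?_,
    Set.ncard_image_of_injOn ?_]
  · intro l1 h1 l2 h2 heq
    have hne1 : l1 ≠ [] := by rintro rfl; simp at h1; omega
    have hne2 : l2 ≠ [] := by rintro rfl; simp at h2; omega
    have := go_encode l1 h1.1 hne1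
    rw [heq, go_encode l2 h2.1 hne2] at this
    exact (List.reverse_injective this).symm
  · ext w
    simp only [Set.mem_image, Set.mem_setOf_eq]
    constructor
    · rintro ⟨hpal, hsum⟩
      refine ⟨(go 1 w).reverse, ⟨isPartition_decode w, ?_, ?_⟩, partitionWord_decode w⟩
      · rw [sum_decode, hsum]
      · rw [partitionWord_decode]; exact hpal
    · rintro ⟨l, ⟨hpart, hsum, hpal⟩, rfl⟩
      have hne : l ≠ [] := by rintro rfl; simp at hsum; omega
      refine ⟨hpal, ?_⟩
      have := sum_decode (partitionWord l)
      rw [go_encode l hpart hne, List.reverse_reverse] at this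
      omega

end PalAux

namespace PalAux

def S (k l : ℕ) : Set (List Bool) := {u | u.count true = k ∧ u.count false = l}

lemma S_finite (k l : ℕ) : (S k l).Finite := by
  apply Set.Finite.subset (List.finite_length_eq Bool (k+l))
  rintro u ⟨h1, h2⟩
  have := count_true_add_count_false u
  simp only [Set.mem_setOf_eq]
  omega

lemma ncard_S_aux : ∀ m k l : ℕ, k + l = m → (S k l).ncard = (k + l).choose k := by
  intro m
  induction m with
  | zero =>
    intro k l h
    obtain ⟨rfl, rfl⟩ : k = 0 ∧ l = 0 := by omega
    have hset : S 0 0 = {([] : List Bool)} := by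
      ext u
      simp only [S, Set.mem_setOf_eq, Set.mem_singleton_iff]
      constructor
      · rintro ⟨h1, h2⟩
        have := count_true_add_count_false u
        have hlen : u.length = 0 := by omega
        exact List.length_eq_zero_iff.mp hlen
      · rintro rfl; simp
    rw [hset]; simp
  | succ m ih =>
    intro k l h
    match k, l with
    | 0, l + 1 =>
      have hset : S 0 (l+1) = (List.cons false) '' S 0 l := by
        ext u
        simp only [S, Set.mem_setOf_eq, Set.mem_image]
        constructor
        · rintro ⟨h1, h2⟩
          match u with
          | [] => simp at h2
          | true :: t => simp [List.count_cons] at h1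
          | false :: t =>
            simp [List.count_cons] at h1 h2
            exact ⟨t, ⟨by simpa using h1, by omega⟩, rfl⟩
        · rintro ⟨t, ⟨h1, h2⟩, rfl⟩
          simp [List.count_cons, h1, h2]
      rw [hset, Set.ncard_image_of_injective _ List.cons_injective, ih 0 l (by omega)]
      simp
    | k + 1, 0 =>
      have hset : S (k+1) 0 = (List.cons true) '' S k 0 := by
        ext u
        simp only [S, Set.mem_setOf_eq, Set.mem_image]
        constructor
        · rintro ⟨h1, h2⟩
          match u with
          | [] => simp at h1
          | false :: t => simp [List.count_cons] at h2
          | true :: t =>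
            simp [List.count_cons] at h1 h2
            exact ⟨t, ⟨by omega, by simpa using h2⟩, rfl⟩
        · rintro ⟨t, ⟨h1, h2⟩, rfl⟩
          simp [List.count_cons, h1, h2]
      rw [hset, Set.ncard_image_of_injective _ List.cons_injective, ih k 0 (by omega)]
      simp
    | k + 1, l + 1 =>
      have hset : S (k+1) (l+1) =
          (List.cons true) '' S k (l+1) ∪ (List.cons false) '' S (k+1) l := by
        ext u
        simp only [S, Set.mem_setOf_eq, Set.mem_union, Set.mem_image]
        constructor
        · rintro ⟨h1, h2⟩
          match u with
          | [] => simp at h1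
          | true :: t =>
            simp [List.count_cons] at h1 h2
            exact Or.inl ⟨t, ⟨by omega, by simpa using h2⟩, rfl⟩
          | false :: t =>
            simp [List.count_cons] at h1 h2
            exact Or.inr ⟨t, ⟨by simpa using h1, by omega⟩, rfl⟩
        · rintro (⟨t, ⟨h1, h2⟩, rfl⟩ | ⟨t, ⟨h1, h2⟩, rfl⟩) <;>
            simp [List.count_cons, h1, h2]
      have hdisj : Disjoint ((List.cons true) '' S k (l+1))
          ((List.cons false) '' S (k+1) l) := by
        rw [Set.disjoint_left]
        rintro u ⟨t, _, rfl⟩ ⟨t', _, habs⟩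
        simp at habs
      rw [hset, Set.ncard_union_eq hdisj ((S_finite _ _).image _) ((S_finite _ _).image _),
        Set.ncard_image_of_injective _ List.cons_injective,
        Set.ncard_image_of_injective _ List.cons_injective,
        ih k (l+1) (by omega), ih (k+1) l (by omega)]
      have h1 : k + 1 + (l + 1) = (k + (l+1)) + 1 := by omega
      have h2 : k + 1 + l = k + (l + 1) := by omega
      rw [h1, h2, Nat.choose_succ_succ]

lemma ncard_S (k l : ℕ) : (S k l).ncard = (k + l).choose k := ncard_S_aux (k+l) k l rfl

end PalAux

namespace PalAux

lemma inv_even (u : List Bool) :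
    inv (u ++ u.reverse) = 2 * (u.count true * u.count false) := by
  rw [inv_append, count_reverse]
  have := inv_reverse u
  omega

lemma inv_odd_true (u : List Bool) :
    inv (u ++ true :: u.reverse) = 2 * (u.count true * u.count false) + u.count false := by
  rw [inv_append]
  show inv u + (u.reverse.count false + inv u.reverse) +
      u.count true * ((true :: u.reverse).count false) = _
  rw [count_reverse, List.count_cons]
  have := inv_reverse u
  norm_num
  omega

lemma inv_odd_false (u : List Bool) :
    inv (u ++ false :: u.reverse) = 2 * (u.count true * u.count false) + u.count true := by
  rw [inv_append]
  show inv u + inv u.reverse + u.count true * ((false :: u.reverse).count false) = _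
  rw [List.count_cons, count_reverse]
  have := inv_reverse u
  norm_num
  have h2 : u.count true * (u.count false + 1) = u.count true * u.count false + u.count true := by
    ring
  omega

lemma pal_even (u : List Bool) : u ++ u.reverse = (u ++ u.reverse).reverse := by
  rw [List.reverse_append, List.reverse_reverse]

lemma pal_odd (u : List Bool) (x : Bool) :
    u ++ x :: u.reverse = (u ++ x :: u.reverse).reverse := by
  simp [List.reverse_cons, List.append_assoc]

lemma count_even (u : List Bool) (b : Bool) :
    (u ++ u.reverse).count b = 2 * u.count b := by
  rw [List.count_append, count_reverse]; omega

lemma len_even (u : List Bool) : (u ++ u.reverse).length = 2 * u.length := by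
  simp; omega

lemma len_odd (u : List Bool) (x : Bool) :
    (u ++ x :: u.reverse).length = 2 * u.length + 1 := by
  simp; omega

def U1 (n : ℕ) : Set (List Bool) :=
  {u | 2 * u.count true * u.count false + 2 * u.count true + 2 * u.count false + 1 = n}
def U2 (n : ℕ) : Set (List Bool) :=
  {u | 2 * u.count true * u.count false + 2 * u.count true + 3 * u.count false + 2 = n}
def U3 (n : ℕ) : Set (List Bool) :=
  {u | 2 * u.count true * u.count false + 3 * u.count true + 2 * u.count false + 2 = n}

lemma U1_finite (n : ℕ) : (U1 n).Finite := by
  apply Set.Finite.subset (List.finite_length_le Bool n)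
  intro u hu
  simp only [U1, Set.mem_setOf_eq] at hu
  have := count_true_add_count_false u
  simp only [Set.mem_setOf_eq]
  omega

lemma U2_finite (n : ℕ) : (U2 n).Finite := by
  apply Set.Finite.subset (List.finite_length_le Bool n)
  intro u hu
  simp only [U2, Set.mem_setOf_eq] at hu
  have := count_true_add_count_false u
  simp only [Set.mem_setOf_eq]
  omega

lemma U3_finite (n : ℕ) : (U3 n).Finite := by
  apply Set.Finite.subset (List.finite_length_le Bool n)
  intro u hu
  simp only [U3, Set.mem_setOf_eq] at hu
  have := count_true_add_count_false u
  simp only [Set.mem_setOf_eq]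
  omega

lemma words_decomp (n : ℕ) :
    {w : List Bool | w = w.reverse ∧ inv w + w.length + 1 = n} =
      (fun u => u ++ u.reverse) '' U1 n ∪ (fun u => u ++ true :: u.reverse) '' U2 n
        ∪ (fun u => u ++ false :: u.reverse) '' U3 n := by
  ext w
  simp only [Set.mem_union, Set.mem_image, Set.mem_setOf_eq, U1, U2, U3]
  constructor
  · rintro ⟨hpal, hsum⟩
    rcases Nat.even_or_odd w.length with ⟨L, hL⟩ | ⟨L, hL⟩
    · -- even length
      have hdrop : (w.drop L).reverse = w.take L := by
        rw [List.reverse_drop, ← hpal]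
        congr 1
        omega
      have hdrop' : w.drop L = (w.take L).reverse := by
        rw [← hdrop, List.reverse_reverse]
      have hw : w = w.take L ++ (w.take L).reverse := by
        conv_lhs => rw [← List.take_append_drop L w]
        rw [hdrop']
      set u := w.take L with hu
      left; left
      refine ⟨u, ?_, hw.symm⟩
      have e1 : inv w = 2 * (u.count true * u.count false) := by rw [hw]; exact inv_even u
      have e2 : w.length = 2 * u.length := by rw [hw]; exact len_even u
      have e3 := count_true_add_count_false u
      have e4 : 2 * u.count true * u.count false = 2 * (u.count true * u.count false) := by ring
      omega
    · -- odd length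
      have hlt : L < w.length := by omega
      have h2 : w.drop L = w[L] :: w.drop (L+1) := List.drop_eq_getElem_cons hlt
      have h3 : (w.drop (L+1)).reverse = w.take L := by
        rw [List.reverse_drop, ← hpal]
        congr 1
        omega
      have h4 : w.drop (L+1) = (w.take L).reverse := by
        rw [← h3, List.reverse_reverse]
      have hw : w = w.take L ++ w[L] :: (w.take L).reverse := by
        conv_lhs => rw [← List.take_append_drop L w]
        rw [h2, h4]
      set u := w.take L with hu
      have e3 := count_true_add_count_false u
      have hlen : u.length = L := by rw [hu, List.length_take]; omega
      rcases Bool.eq_false_or_eq_true (w[L]'hlt) with hx | hx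
      · -- middle = true
        left; right
        rw [hx] at hw
        refine ⟨u, ?_, hw.symm⟩
        have e1 : inv w = 2 * (u.count true * u.count false) + u.count false := by
          rw [hw]; exact inv_odd_true u
        have e4 : 2 * u.count true * u.count false
            = 2 * (u.count true * u.count false) := by ring
        omega
      · -- middle = false
        right
        rw [hx] at hw
        refine ⟨u, ?_, hw.symm⟩
        have e1 : inv w = 2 * (u.count true * u.count false) + u.count true := by
          rw [hw]; exact inv_odd_false u
        have e4 : 2 * u.count true * u.count false
            = 2 * (u.count true * u.count false) := by ring
        omega
  · rintro ((⟨u, hu, rfl⟩ | ⟨u, hu, rfl⟩) | ⟨u, hu, rfl⟩)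
    · refine ⟨pal_even u, ?_⟩
      have e1 := inv_even u
      have e2 := len_even u
      have e3 := count_true_add_count_false u
      have e4 : 2 * u.count true * u.count false
          = 2 * (u.count true * u.count false) := by ring
      omega
    · refine ⟨pal_odd u true, ?_⟩
      have e1 := inv_odd_true u
      have e2 := len_odd u true
      have e3 := count_true_add_count_false u
      have e4 : 2 * u.count true * u.count false
          = 2 * (u.count true * u.count false) := by ring
      omega
    · refine ⟨pal_odd u false, ?_⟩
      have e1 := inv_odd_false u
      have e2 := len_odd u false
      have e3 := count_true_add_count_false u
      have e4 : 2 * u.count true * u.count false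
          = 2 * (u.count true * u.count false) := by ring
      omega

end PalAux

namespace PalAux

lemma inj_even : Function.Injective (fun u : List Bool => u ++ u.reverse) := by
  intro u v h
  simp only at h
  have hlen : u.length = v.length := by
    have := congrArg List.length h
    simp at this
    omega
  exact (List.append_inj h hlen).1

lemma inj_odd (x : Bool) : Function.Injective (fun u : List Bool => u ++ x :: u.reverse) := by
  intro u v h
  simp only at h
  have hlen : u.length = v.length := by
    have := congrArg List.length h
    simp at this
    omega
  exact (List.append_inj h hlen).1

lemma words_ncard (n : ℕ) :
    {w : List Bool | w = w.reverse ∧ inv w + w.length + 1 = n}.ncard =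
      (U1 n).ncard + (U2 n).ncard + (U3 n).ncard := by
  have d12 : Disjoint ((fun u : List Bool => u ++ u.reverse) '' U1 n)
      ((fun u : List Bool => u ++ true :: u.reverse) '' U2 n) := by
    rw [Set.disjoint_left]
    rintro w ⟨u, _, rfl⟩ ⟨v, _, habs⟩
    have := congrArg List.length habs
    simp at this
    omega
  have d13 : Disjoint ((fun u : List Bool => u ++ u.reverse) '' U1 n)
      ((fun u : List Bool => u ++ false :: u.reverse) '' U3 n) := by
    rw [Set.disjoint_left]
    rintro w ⟨u, _, rfl⟩ ⟨v, _, habs⟩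
    have := congrArg List.length habs
    simp at this
    omega
  have d23 : Disjoint ((fun u : List Bool => u ++ true :: u.reverse) '' U2 n)
      ((fun u : List Bool => u ++ false :: u.reverse) '' U3 n) := by
    rw [Set.disjoint_left]
    rintro w ⟨u, _, rfl⟩ ⟨v, _, habs⟩
    have hlen : v.length = u.length := by
      have := congrArg List.length habs
      simp at this
      omega
    have := (List.append_inj habs.symm (by simp [hlen])).2
    simp at this
  rw [words_decomp n,
    Set.ncard_union_eq (by
      rw [Set.disjoint_union_left]; exact ⟨d13, d23⟩)
      (((U1_finite n).image _).union ((U2_finite n).image _)) ((U3_finite n).image _),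
    Set.ncard_union_eq d12 ((U1_finite n).image _) ((U2_finite n).image _),
    Set.ncard_image_of_injective _ inj_even,
    Set.ncard_image_of_injective _ (inj_odd true),
    Set.ncard_image_of_injective _ (inj_odd false)]

lemma ncard_cond (P : ℕ → ℕ → Prop) (f : Finset (ℕ × ℕ))
    (hf : ∀ k l, P k l ↔ (k, l) ∈ f) :
    {u : List Bool | P (u.count true) (u.count false)}.ncard
      = ∑ p ∈ f, (p.1 + p.2).choose p.1 := by
  have hA : {u : List Bool | P (u.count true) (u.count false)} = ⋃ p ∈ f, S p.1 p.2 := by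
    ext u
    simp only [Set.mem_setOf_eq, Set.mem_iUnion, S]
    constructor
    · intro h
      exact ⟨(u.count true, u.count false), (hf _ _).mp h, rfl, rfl⟩
    · rintro ⟨⟨k, l⟩, hmem, h1, h2⟩
      subst h1; subst h2
      exact (hf _ _).mpr hmem
  have hfin : (⋃ p ∈ f, S p.1 p.2).Finite :=
    Set.Finite.biUnion f.finite_toSet (fun p _ => S_finite p.1 p.2)
  rw [hA, Set.ncard_eq_toFinset_card _ hfin]
  have htf : hfin.toFinset = f.biUnion (fun p => (S_finite p.1 p.2).toFinset) := by
    ext u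
    simp [Set.Finite.mem_toFinset, Finset.mem_biUnion]
  rw [htf, Finset.card_biUnion]
  · apply Finset.sum_congr rfl
    intro p _
    rw [← Set.ncard_eq_toFinset_card _ (S_finite p.1 p.2), ncard_S]
  · intro x hx y hy hxy
    rw [Function.onFun, Finset.disjoint_left]
    intro u hu hu'
    simp only [Set.Finite.mem_toFinset, S, Set.mem_setOf_eq] at hu hu'
    exact hxy (Prod.ext (by omega) (by omega))

end PalAux

/-- coefficient form of the generating function for `PP(n)`:
`PP(n) = Σ_{2kl+2k+2l+1=n} C(k+l,k) + 2 Σ_{2kl+2k+3l+2=n} C(k+l,k)`. -/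
theorem palindromePaper_stmt8 (n : ℕ) (hn : 1 ≤ n) :
    PP n =
      (∑ p ∈ (Finset.range n ×ˢ Finset.range n).filter
          (fun p => 2 * p.1 * p.2 + 2 * p.1 + 2 * p.2 + 1 = n),
        (p.1 + p.2).choose p.1) +
      2 * (∑ p ∈ (Finset.range n ×ˢ Finset.range n).filter
          (fun p => 2 * p.1 * p.2 + 2 * p.1 + 3 * p.2 + 2 = n),
        (p.1 + p.2).choose p.1) := by
  rw [PalAux.PP_eq_words n hn, PalAux.words_ncard n]
  have h1 : (PalAux.U1 n).ncard = ∑ p ∈ (Finset.range n ×ˢ Finset.range n).filter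
      (fun p => 2 * p.1 * p.2 + 2 * p.1 + 2 * p.2 + 1 = n), (p.1 + p.2).choose p.1 :=
    PalAux.ncard_cond (fun k l => 2 * k * l + 2 * k + 2 * l + 1 = n) _ (by
      intro k l
      simp only [Finset.mem_filter, Finset.mem_product, Finset.mem_range]
      omega)
  have h2 : (PalAux.U2 n).ncard = ∑ p ∈ (Finset.range n ×ˢ Finset.range n).filter
      (fun p => 2 * p.1 * p.2 + 2 * p.1 + 3 * p.2 + 2 = n), (p.1 + p.2).choose p.1 :=
    PalAux.ncard_cond (fun k l => 2 * k * l + 2 * k + 3 * l + 2 = n) _ (by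
      intro k l
      simp only [Finset.mem_filter, Finset.mem_product, Finset.mem_range]
      omega)
  have h3 : (PalAux.U3 n).ncard = ∑ p ∈ (Finset.range n ×ˢ Finset.range n).filter
      (fun p => 2 * p.1 * p.2 + 3 * p.1 + 2 * p.2 + 2 = n), (p.1 + p.2).choose p.1 :=
    PalAux.ncard_cond (fun k l => 2 * k * l + 3 * k + 2 * l + 2 = n) _ (by
      intro k l
      simp only [Finset.mem_filter, Finset.mem_product, Finset.mem_range]
      omega)
  have h4 : ∑ p ∈ (Finset.range n ×ˢ Finset.range n).filter
      (fun p => 2 * p.1 * p.2 + 3 * p.1 + 2 * p.2 + 2 = n), (p.1 + p.2).choose p.1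
      = ∑ p ∈ (Finset.range n ×ˢ Finset.range n).filter
      (fun p => 2 * p.1 * p.2 + 2 * p.1 + 3 * p.2 + 2 = n), (p.1 + p.2).choose p.1 := by
    apply Finset.sum_nbij' (i := Prod.swap) (j := Prod.swap)
    · intro p hp
      simp only [Finset.mem_filter, Finset.mem_product, Finset.mem_range, Prod.fst_swap,
        Prod.snd_swap] at hp ⊢
      have : 2 * p.2 * p.1 = 2 * p.1 * p.2 := by ring
      omega
    · intro p hp
      simp only [Finset.mem_filter, Finset.mem_product, Finset.mem_range, Prod.fst_swap,
        Prod.snd_swap] at hp ⊢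
      have : 2 * p.2 * p.1 = 2 * p.1 * p.2 := by ring
      omega
    · intro p _; exact Prod.swap_swap p
    · intro p _; exact Prod.swap_swap p
    · intro p _
      simp only [Prod.fst_swap, Prod.snd_swap]
      have h := Nat.choose_symm (Nat.le_add_right p.1 p.2 : p.1 ≤ p.1 + p.2)
      simp only [Nat.add_sub_cancel_left] at h
      rw [Nat.add_comm p.2 p.1]
      exact h.symm
  rw [h1, h2, h3, h4]
  ring
end

section
/- For every integer n ≥ 2, PP(n) = 2 if and only if n = 3 or n + 1 is prime. -/
/-- number of (true, later false) pairs -/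
def pinv : List Bool → ℕ
  | [] => 0
  | b :: t => (if b then t.count false else 0) + pinv t

lemma pinv_rep_true_append (k : ℕ) (v : List Bool) :
    pinv (List.replicate k true ++ v) = k * v.count false + pinv v := by
  induction k with
  | zero => simp [pinv]
  | succ k ih =>
    rw [List.replicate_succ, List.cons_append]
    simp only [pinv, if_true, ih, List.count_append, List.count_replicate]
    simp [Nat.succ_mul]; ring

lemma pinv_append_singleton (u : List Bool) (b : Bool) :
    pinv (u ++ [b]) = pinv u + if b then 0 else u.count true := by
  induction u with
  | nil => cases b <;> simp [pinv]
  | cons c t ih =>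
    rw [List.cons_append]
    simp only [pinv, ih, List.count_append, List.count_cons]
    cases b <;> cases c <;> simp <;> omega

lemma pinv_reverse (w : List Bool) :
    pinv w.reverse + pinv w = w.count true * w.count false := by
  induction w with
  | nil => simp [pinv]
  | cons b t ih =>
    rw [List.reverse_cons, pinv_append_singleton]
    simp only [pinv, List.count_cons, List.count_reverse]
    cases b <;> simp [Nat.succ_mul, Nat.mul_succ] <;> linarith [ih]

lemma count_false_wordAux (prev : ℕ) (rest : List ℕ) :
    (wordAux prev rest).count false = rest.length := by
  induction rest generalizing prev with
  | nil => simp [wordAux]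
  | cons a t ih => simp [wordAux, List.count_append, List.count_replicate, ih]

lemma sum_wordAux (rest : List ℕ) (prev : ℕ) (h : List.Chain (· ≤ ·) prev rest) :
    pinv (wordAux prev rest) + (wordAux prev rest).count true + prev * rest.length
      = rest.sum := by
  induction rest generalizing prev with
  | nil => simp [wordAux, pinv]
  | cons a t ih =>
    simp only [List.Chain, List.isChain_cons_cons] at h
    obtain ⟨hpa, hch⟩ := h
    obtain ⟨d, rfl⟩ : ∃ d, a = prev + d := ⟨a - prev, by omega⟩
    have ihs := ih (prev + d) hch
    have e1 : wordAux prev ((prev + d) :: t)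
        = false :: (List.replicate d true ++ wordAux (prev + d) t) := by
      simp [wordAux]
    rw [e1]
    have e2 : pinv (false :: (List.replicate d true ++ wordAux (prev + d) t))
        = d * t.length + pinv (wordAux (prev + d) t) := by
      simp [pinv, pinv_rep_true_append, count_false_wordAux]
    have e3 : (false :: (List.replicate d true ++ wordAux (prev + d) t)).count true
        = d + (wordAux (prev + d) t).count true := by
      simp [List.count_cons, List.count_append, List.count_replicate]
    rw [e2, e3, List.sum_cons, List.length_cons]
    rw [Nat.mul_add, Nat.mul_one]
    linarith [ihs]

lemma count_true_zero_wordAux (rest : List ℕ) (prev : ℕ) (h : List.Chain (· ≤ ·) prev rest)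
    (h0 : (wordAux prev rest).count true = 0) : rest = List.replicate rest.length prev := by
  induction rest generalizing prev with
  | nil => simp
  | cons a t ih =>
    simp only [List.Chain, List.isChain_cons_cons] at h
    obtain ⟨hpa, hch⟩ := h
    have hc : (wordAux prev (a :: t)).count true
        = (a - prev) + (wordAux a t).count true := by
      simp [wordAux, List.count_append, List.count_cons, List.count_replicate]
    rw [hc] at h0
    have h1 : a - prev = 0 := by omega
    have h2 : (wordAux a t).count true = 0 := by omega
    have ha : a = prev := by omega
    subst ha
    have := ih a hch h2
    simp [List.replicate_succ, ← this]

lemma wordAux_replicate_append (a k : ℕ) (s : List ℕ) :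
    wordAux a (List.replicate k a ++ s) = List.replicate k false ++ wordAux a s := by
  induction k with
  | zero => simp
  | succ k ih => simp [List.replicate_succ, wordAux, ih]

lemma wordAux_replicate (a k : ℕ) :
    wordAux a (List.replicate k a) = List.replicate k false := by
  have h := wordAux_replicate_append a k []
  rw [List.append_nil] at h
  rw [h]
  simp [wordAux]

/-- main counting lemma -/
lemma sum_eq_word (l : List ℕ) (hp : IsPartition l) (hne : l ≠ []) :
    pinv (partitionWord l) + (partitionWord l).count true
      + (partitionWord l).count false + 1 = l.sum := by
  obtain ⟨a, rest, hrev⟩ : ∃ a rest, l.reverse = a :: rest := by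
    cases hl : l.reverse with
    | nil => exact absurd (by simpa using congrArg List.reverse hl) hne
    | cons a rest => exact ⟨a, rest, rfl⟩
  have hsorted : List.Pairwise (· ≤ ·) (a :: rest) := by
    rw [← hrev]
    exact List.pairwise_reverse.mpr hp.1
  have hch : List.Chain (· ≤ ·) a rest := by
    simp only [List.Chain]; rw [List.isChain_iff_pairwise]; exact hsorted
  have ha : 0 < a := hp.2 a (by rw [← List.mem_reverse, hrev]; exact List.mem_cons_self)
  have hsum : l.sum = a + rest.sum := by
    rw [← List.sum_reverse, hrev, List.sum_cons]
  have hW : partitionWord l = List.replicate (a - 1) true ++ wordAux a rest := by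
    rw [partitionWord, hrev]
  rw [hW, hsum]
  have hs := sum_wordAux rest a hch
  obtain ⟨e, rfl⟩ : ∃ e, a = e + 1 := ⟨a - 1, by omega⟩
  rw [Nat.add_sub_cancel, pinv_rep_true_append, count_false_wordAux]
  have e3 : (List.replicate e true ++ wordAux (e + 1) rest).count true
      = e + (wordAux (e + 1) rest).count true := by
    simp [List.count_append, List.count_replicate]
  have e4 : (List.replicate e true ++ wordAux (e + 1) rest).count false
      = (wordAux (e + 1) rest).count false := by
    simp [List.count_append, List.count_replicate]
  rw [e3, e4, count_false_wordAux]
  rw [Nat.add_mul, Nat.one_mul] at hs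
  linarith [hs]

lemma partitionWord_eq {l : List ℕ} {a : ℕ} {rest : List ℕ} (h : l.reverse = a :: rest) :
    partitionWord l = List.replicate (a-1) true ++ wordAux a rest := by
  rw [partitionWord, h]

def PPset (n : ℕ) : Set (List ℕ) :=
  {l : List ℕ | IsPartition l ∧ l.sum = n ∧
    partitionWord l = (partitionWord l).reverse}

lemma word_single (n : ℕ) : partitionWord [n] = List.replicate (n-1) true := by
  have h : ([n] : List ℕ).reverse = n :: [] := by simp
  rw [partitionWord_eq h]
  simp [wordAux]

lemma mem_single {n : ℕ} (hn : 1 ≤ n) : [n] ∈ PPset n := by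
  refine ⟨⟨List.pairwise_singleton _ n, by simp; omega⟩, by simp, ?_⟩
  rw [word_single]
  simp

lemma word_ones {n : ℕ} (hn : 1 ≤ n) :
    partitionWord (List.replicate n 1) = List.replicate (n-1) false := by
  obtain ⟨m, rfl⟩ : ∃ m, n = m + 1 := ⟨n - 1, by omega⟩
  have h : (List.replicate (m+1) (1:ℕ)).reverse = 1 :: List.replicate m 1 := by
    rw [List.reverse_replicate, List.replicate_succ]
  rw [partitionWord_eq h, wordAux_replicate]
  simp

lemma mem_ones {n : ℕ} (hn : 1 ≤ n) : List.replicate n 1 ∈ PPset n := by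
  refine ⟨⟨?_, ?_⟩, by simp [List.sum_replicate], ?_⟩
  · exact List.pairwise_replicate.mpr (Or.inr le_rfl)
  · intro x hx; rw [List.mem_replicate] at hx; omega
  · rw [word_ones hn]; simp

lemma mem_third {a b : ℕ} (ha : 2 ≤ a) (hb : 3 ≤ b) :
    (2*a - 1) :: List.replicate (b-2) a ∈ PPset (a*b - 1) := by
  refine ⟨⟨?_, ?_⟩, ?_, ?_⟩
  · rw [List.pairwise_cons]
    constructor
    · intro y hy; rw [List.mem_replicate] at hy; omega
    · exact List.pairwise_replicate.mpr (Or.inr le_rfl)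
  · intro x hx
    rcases List.mem_cons.1 hx with rfl | hx
    · omega
    · rw [List.mem_replicate] at hx; omega
  · obtain ⟨c, rfl⟩ : ∃ c, b = c + 2 := ⟨b - 2, by omega⟩
    simp only [List.sum_cons, List.sum_replicate, Nat.add_sub_cancel, smul_eq_mul]
    have h1 : a * (c + 2) = a * c + 2 * a := by ring
    have h2 : c * a = a * c := Nat.mul_comm c a
    rw [h1, h2]
    generalize a * c = m
    omega
  · obtain ⟨c, rfl⟩ : ∃ c, b = c + 3 := ⟨b - 3, by omega⟩
    have hrev : ((2*a - 1) :: List.replicate (c + 3 - 2) a).reverse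
        = a :: (List.replicate c a ++ [2*a - 1]) := by
      have : c + 3 - 2 = c + 1 := by omega
      rw [this, List.reverse_cons, List.reverse_replicate, List.replicate_succ]
      simp
    rw [partitionWord_eq hrev, wordAux_replicate_append]
    have h2 : wordAux a [2*a - 1] = false :: List.replicate (a-1) true := by
      have : 2*a - 1 - a = a - 1 := by omega
      simp [wordAux, this]
    rw [h2]
    rw [show (List.replicate c false ++ (false :: List.replicate (a - 1) true))
        = (List.replicate (c+1) false ++ List.replicate (a - 1) true) by
      rw [List.replicate_succ']; simp]
    simp [List.reverse_append, List.reverse_replicate, List.append_assoc]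

lemma eq_single_of_cf_zero {l : List ℕ} (hp : IsPartition l) (hne : l ≠ [])
    (h0 : (partitionWord l).count false = 0) : l = [l.sum] := by
  obtain ⟨a, rest, hrev⟩ : ∃ a rest, l.reverse = a :: rest := by
    cases hl : l.reverse with
    | nil => exact absurd (by simpa using congrArg List.reverse hl) hne
    | cons a rest => exact ⟨a, rest, rfl⟩
  rw [partitionWord_eq hrev, List.count_append, List.count_replicate,
    count_false_wordAux] at h0
  have hrest : rest = [] := by
    simp at h0
    exact h0
  subst hrest
  have hl : l = [a] := by
    have := congrArg List.reverse hrev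
    simpa using this
  subst hl
  simp

lemma eq_ones_of_ct_zero {l : List ℕ} (hp : IsPartition l) (hne : l ≠ [])
    (h0 : (partitionWord l).count true = 0) : l = List.replicate l.sum 1 := by
  obtain ⟨a, rest, hrev⟩ : ∃ a rest, l.reverse = a :: rest := by
    cases hl : l.reverse with
    | nil => exact absurd (by simpa using congrArg List.reverse hl) hne
    | cons a rest => exact ⟨a, rest, rfl⟩
  have hch : List.Chain (· ≤ ·) a rest := by
    simp only [List.Chain]; rw [List.isChain_iff_pairwise]
    rw [← hrev]
    exact List.pairwise_reverse.mpr hp.1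
  have ha : 0 < a := hp.2 a (by rw [← List.mem_reverse, hrev]; exact List.mem_cons_self)
  rw [partitionWord_eq hrev, List.count_append, List.count_replicate] at h0
  simp only [beq_self_eq_true, if_true] at h0
  have ha1 : a = 1 := by omega
  subst ha1
  have hct : (wordAux 1 rest).count true = 0 := by omega
  have hrest := count_true_zero_wordAux rest 1 hch hct
  have hl : l = List.replicate (rest.length + 1) 1 := by
    have := congrArg List.reverse hrev
    rw [List.reverse_reverse] at this
    rw [this, hrest, ← List.replicate_succ, List.reverse_replicate]
    simp
  have hsum : l.sum = rest.length + 1 := by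
    rw [hl]; simp [List.sum_replicate]
  rw [hsum, hl]

lemma classify {n : ℕ} (hn : 2 ≤ n) {l : List ℕ} (hl : l ∈ PPset n) :
    l = [n] ∨ l = List.replicate n 1 ∨
      ∃ p q, 3 ≤ p ∧ 3 ≤ q ∧ p * q = 2 * (n + 1) := by
  obtain ⟨hp, hsum, hpal⟩ := hl
  have hne : l ≠ [] := by rintro rfl; simp at hsum; omega
  have h1 := sum_eq_word l hp hne
  have h2 : 2 * pinv (partitionWord l)
      = (partitionWord l).count true * (partitionWord l).count false := by
    have h := pinv_reverse (partitionWord l)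
    rw [← hpal] at h
    omega
  set o := (partitionWord l).count true with ho
  set z := (partitionWord l).count false with hz
  by_cases hoz : o = 0
  · right; left
    rw [← hsum]
    exact eq_ones_of_ct_zero hp hne (ho ▸ hoz)
  by_cases hzz : z = 0
  · left
    rw [← hsum]
    exact eq_single_of_cf_zero hp hne hzz
  · right; right
    refine ⟨o + 2, z + 2, by omega, by omega, ?_⟩
    have hexp : (o + 2) * (z + 2) = o * z + 2 * o + 2 * z + 4 := by ring
    rw [hexp]
    rw [hsum] at h1
    linarith [h1, h2]

lemma length_le_sum_of_pos (l : List ℕ) (h : ∀ x ∈ l, 0 < x) : l.length ≤ l.sum := by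
  induction l with
  | nil => simp
  | cons a t ih =>
    simp only [List.length_cons, List.sum_cons]
    have h1 := h a List.mem_cons_self
    have h2 := ih fun x hx => h x (List.mem_cons_of_mem _ hx)
    omega

lemma ppset_finite (n : ℕ) : (PPset n).Finite := by
  have h1 : {l : List (Fin (n+1)) | l.length ≤ n}.Finite := List.finite_length_le _ n
  apply Set.Finite.subset (h1.image (List.map Fin.val))
  rintro l ⟨⟨hsort, hpos⟩, hsum, -⟩
  have hb : ∀ x ∈ l, x ≤ n := fun x hx =>
    hsum ▸ List.single_le_sum (fun y _ => Nat.zero_le y) x hx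
  have hlen : l.length ≤ n := hsum ▸ length_le_sum_of_pos l hpos
  refine ⟨l.map (fun x => (⟨x % (n+1), Nat.mod_lt _ (by omega)⟩ : Fin (n+1))), by
    simpa using hlen, ?_⟩
  rw [List.map_map]
  have : ∀ x ∈ l, (Fin.val ∘ fun x => (⟨x % (n+1), Nat.mod_lt _ (by omega)⟩ : Fin (n+1))) x
      = id x := by
    intro x hx
    have := hb x hx
    simp [Nat.mod_eq_of_lt (by omega : x < n+1)]
  rw [List.map_congr_left this, List.map_id]

lemma arith_iff (n : ℕ) (hn : 2 ≤ n) :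
    (¬ ∃ p q, 3 ≤ p ∧ 3 ≤ q ∧ p * q = 2 * (n+1)) ↔ (n = 3 ∨ (n+1).Prime) := by
  constructor
  · intro h
    by_contra hc
    push_neg at hc
    obtain ⟨h3, hpr⟩ := hc
    obtain ⟨a, ⟨b, hab⟩, ha2, haub⟩ := Nat.exists_dvd_of_not_prime2 (by omega) hpr
    have hb0 : b ≠ 0 := by rintro rfl; omega
    have hb1 : b ≠ 1 := by rintro rfl; omega
    by_cases ha3 : 3 ≤ a
    · exact h ⟨a, 2 * b, ha3, by omega, by rw [hab]; ring⟩
    · have ha : a = 2 := by omega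
      subst ha
      by_cases hb3 : 3 ≤ b
      · exact h ⟨4, b, by omega, hb3, by rw [hab]; ring⟩
      · have hb : b = 2 := by omega
        subst hb
        omega
  · rintro (rfl | hp) ⟨p, q, hp3, hq3, hpq⟩
    · nlinarith
    · have hdvd : (n+1) ∣ p * q := ⟨2, by omega⟩
      rcases (Nat.Prime.dvd_mul hp).1 hdvd with h | h
      · obtain ⟨k, rfl⟩ := h
        have hkq : (n+1) * (k * q) = (n+1) * 2 := by
          calc (n+1) * (k * q) = (n+1) * k * q := by ring
            _ = 2 * (n+1) := hpq
            _ = (n+1) * 2 := by ring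
        have h2 : k * q = 2 := Nat.eq_of_mul_eq_mul_left (by omega) hkq
        have : q ≤ 2 := Nat.le_of_dvd (by omega) ⟨k, by rw [← h2]; ring⟩
        omega
      · obtain ⟨k, rfl⟩ := h
        have hkq : (n+1) * (k * p) = (n+1) * 2 := by
          calc (n+1) * (k * p) = p * ((n+1) * k) := by ring
            _ = 2 * (n+1) := hpq
            _ = (n+1) * 2 := by ring
        have h2 : k * p = 2 := Nat.eq_of_mul_eq_mul_left (by omega) hkq
        have : p ≤ 2 := Nat.le_of_dvd (by omega) ⟨k, by rw [← h2]; ring⟩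
        omega

lemma single_ne_ones {n : ℕ} (hn : 2 ≤ n) : [n] ≠ List.replicate n 1 := by
  intro h
  have := congrArg List.length h
  simp at this
  omega

/-- for `n ≥ 2`, `PP(n) = 2` iff `n = 3` or `n + 1` is prime. -/
theorem palindromePaper_stmt9 (n : ℕ) (hn : 2 ≤ n) :
    PP n = 2 ↔ n = 3 ∨ Nat.Prime (n + 1) := by
  have hPP : PP n = (PPset n).ncard := rfl
  rw [← arith_iff n hn]
  constructor
  · intro h2
    rintro ⟨p, q, hp3, hq3, hpq⟩
    have key : ∀ a b : ℕ, 2 ≤ a → 3 ≤ b → a * b = n + 1 → False := by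
      intro a b ha hb hab
      set l3 : List ℕ := (2*a-1) :: List.replicate (b-2) a with hl3
      have h3 : l3 ∈ PPset n := by
        have := mem_third ha hb
        rw [hab] at this
        simpa using this
      have d1 : l3 ≠ [n] := by
        intro h
        have := congrArg List.length h
        simp [hl3] at this
        omega
      have d2 : l3 ≠ List.replicate n 1 := by
        intro h
        rw [show n = (n-1)+1 by omega, List.replicate_succ] at h
        have := congrArg List.headI h
        simp [hl3] at this
        omega
      have d3 := single_ne_ones hn
      have hsub : ({l3, [n], List.replicate n 1} : Set (List ℕ)) ⊆ PPset n := by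
        rintro l (rfl | rfl | rfl)
        · exact h3
        · exact mem_single (by omega)
        · exact mem_ones (by omega)
      have hcard : ({l3, [n], List.replicate n 1} : Set (List ℕ)).ncard = 3 := by
        rw [Set.ncard_insert_of_notMem (by simp [d1, d2]) (Set.toFinite _),
          Set.ncard_pair d3]
      have hle := Set.ncard_le_ncard hsub (ppset_finite n)
      rw [hcard, ← hPP, h2] at hle
      omega
    rcases Nat.even_or_odd p with ⟨a, rfl⟩ | hodd
    · refine key a q (by omega) hq3 ?_
      have h2q : 2 * (a * q) = 2 * (n + 1) := by rw [← hpq]; ring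
      omega
    · have hq : Even q := by
        rcases Nat.even_or_odd q with h | h
        · exact h
        · exfalso
          have hodd2 : Odd (p * q) := hodd.mul h
          rw [hpq] at hodd2
          rcases hodd2 with ⟨k, hk⟩
          omega
      obtain ⟨b, rfl⟩ := hq
      refine key b p (by omega) hp3 ?_
      have h2q : 2 * (b * p) = 2 * (n + 1) := by rw [← hpq]; ring
      omega
  · intro hne
    have hset : PPset n = {[n], List.replicate n 1} := by
      apply Set.eq_of_subset_of_subset
      · intro l hl
        rcases classify hn hl with h | h | h
        · exact Or.inl h
        · exact Or.inr h
        · exact absurd h hne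
      · rintro l (rfl | rfl)
        · exact mem_single (by omega)
        · exact mem_ones (by omega)
    rw [hPP, hset, Set.ncard_pair (single_ne_ones hn)]
end

section
/- Let λ and μ be palindrome partitions of the same integer n such that B(λ) and B(μ) have the same length. Then the number of zeros and ones of B(μ) agrees with that of B(λ) up to swapping zeros and ones; equivalently, the unordered pair {largest part of μ, number of parts of μ} equals the unordered pair {largest part of λ, number of parts of λ}. -/
def gfun : List Bool → ℕ
  | [] => 0
  | (true :: t) => t.count false + gfun t
  | (false :: t) => gfun t

def hfun : List Bool → ℕ
  | [] => 0
  | (true :: t) => hfun t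
  | (false :: t) => t.count true + hfun t

lemma count_true_add_count_false (w : List Bool) :
    w.count true + w.count false = w.length := by
  induction w with
  | nil => simp
  | cons x t ih => cases x <;> simp [List.count_cons] <;> omega

lemma gfun_append (u v : List Bool) :
    gfun (u ++ v) = gfun u + gfun v + u.count true * v.count false := by
  induction u with
  | nil => simp [gfun]
  | cons x t ih =>
    cases x <;> simp [gfun, ih, List.count_cons, List.count_append] <;> ring

lemma gfun_add_hfun (w : List Bool) :
    gfun w + hfun w = w.count true * w.count false := by
  induction w with
  | nil => simp [gfun, hfun]
  | cons x t ih =>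
    cases x <;> simp [gfun, hfun, List.count_cons] <;> nlinarith [ih]

lemma gfun_reverse (w : List Bool) : gfun w.reverse = hfun w := by
  induction w with
  | nil => rfl
  | cons x t ih =>
    cases x <;>
      simp [List.reverse_cons, gfun_append, gfun, hfun, ih, List.count_reverse] <;>
      omega

lemma gfun_replicate_true (k : ℕ) : gfun (List.replicate k true) = 0 := by
  induction k with
  | zero => rfl
  | succ k ih => simp [List.replicate_succ, gfun, ih, List.count_replicate]

lemma wordAux_count_false (prev : ℕ) (m : List ℕ) :
    (wordAux prev m).count false = m.length := by
  induction m generalizing prev with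
  | nil => rfl
  | cons a rest ih =>
    simp [wordAux, List.count_append, List.count_cons, List.count_replicate, ih]

lemma wordAux_count_true (prev : ℕ) (m : List ℕ)
    (h : List.Chain (· ≤ ·) prev m) :
    (wordAux prev m).count true + prev = m.getLastD prev := by
  induction m generalizing prev with
  | nil => simp [wordAux]
  | cons a rest ih =>
    replace h := List.isChain_cons_cons.mp h
    have H := ih a h.2
    have hpa := h.1
    simp only [wordAux, List.count_append, List.count_cons, List.count_replicate,
      List.getLastD_cons]
    simp at H ⊢
    omega

lemma wordAux_gfun (prev : ℕ) (m : List ℕ)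
    (h : List.Chain (· ≤ ·) prev m) :
    gfun (wordAux prev m) + m.getLastD prev + prev * m.length = m.sum + prev := by
  induction m generalizing prev with
  | nil => simp [wordAux, gfun]
  | cons a rest ih =>
    replace h := List.isChain_cons_cons.mp h
    have H := ih a h.2
    have hpa := h.1
    have hdecomp : wordAux prev (a :: rest)
        = (false :: List.replicate (a - prev) true) ++ wordAux a rest := rfl
    rw [hdecomp, gfun_append]
    have h0 : gfun (false :: List.replicate (a - prev) true) = 0 := by
      simp [gfun, gfun_replicate_true]
    have h1 : (false :: List.replicate (a - prev) true).count true = a - prev := by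
      simp [List.count_cons, List.count_replicate]
    have h2 : (wordAux a rest).count false = rest.length := wordAux_count_false a rest
    rw [h0, h1, h2, List.getLastD_cons]
    have h3 : (a - prev) * rest.length + prev * rest.length = a * rest.length := by
      rw [← Nat.add_mul, Nat.sub_add_cancel hpa]
    simp only [List.sum_cons, List.length_cons]
    push_cast
    nlinarith [H, h3]

lemma getLast?_cons_eq (b : ℕ) (m : List ℕ) :
    (b :: m).getLast? = some (m.getLastD b) := by
  induction m generalizing b with
  | nil => rfl
  | cons a rest ih => rw [List.getLast?_cons_cons, ih, List.getLastD_cons]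

lemma headI_reverse_cons (b : ℕ) (m : List ℕ) :
    ((b :: m).reverse).headI = m.getLastD b := by
  have h1 : ((b :: m).reverse).head? = some (m.getLastD b) := by
    rw [List.head?_reverse, getLast?_cons_eq]
  cases hrev : (b :: m).reverse with
  | nil => simp [hrev] at h1
  | cons x xs =>
    rw [hrev] at h1
    simp at h1
    simp [h1]

lemma key (l : List ℕ) (hl : IsPartition l) (hlne : l ≠ []) :
    1 ≤ l.headI ∧ 1 ≤ l.length ∧
    (partitionWord l).count true + 1 = l.headI ∧
    (partitionWord l).count false + 1 = l.length ∧
    l.sum + 1 = gfun (partitionWord l) + l.headI + l.length := by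
  obtain ⟨b, m, hrev⟩ : ∃ b m, l.reverse = b :: m := by
    cases h : l.reverse with
    | nil => exact absurd (by simpa using congrArg List.reverse h) hlne
    | cons b m => exact ⟨b, m, rfl⟩
  have hleq : l = (b :: m).reverse := by rw [← hrev, List.reverse_reverse]
  -- chain
  have hsorted : List.Pairwise (· ≤ ·) (b :: m) := by
    rw [← hrev]
    rw [List.pairwise_reverse]
    exact hl.1
  have hchain : List.Chain (· ≤ ·) b m := by
    exact List.isChain_iff_pairwise.mpr hsorted
  have hb : 1 ≤ b := by
    apply hl.2
    have : b ∈ l.reverse := by rw [hrev]; exact List.mem_cons_self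
    simpa using this
  have hword : partitionWord l = List.replicate (b - 1) true ++ wordAux b m := by
    unfold partitionWord
    rw [hrev]
  have hhead : l.headI = m.getLastD b := by rw [hleq, headI_reverse_cons]
  have hlen : l.length = m.length + 1 := by
    rw [hleq]; simp
  have hsum : l.sum = b + m.sum := by rw [hleq]; simp [List.sum_reverse]; omega
  have hct := wordAux_count_true b m hchain
  have hcf := wordAux_count_false b m
  have hg := wordAux_gfun b m hchain
  have hwct : (partitionWord l).count true = (b - 1) + (wordAux b m).count true := by
    rw [hword, List.count_append, List.count_replicate]; simp
  have hwcf : (partitionWord l).count false = m.length := by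
    rw [hword, List.count_append, List.count_replicate, hcf]; simp
  have hwg : gfun (partitionWord l) = gfun (wordAux b m) + (b - 1) * m.length := by
    rw [hword, gfun_append, gfun_replicate_true, List.count_replicate, hcf]
    simp
  have hmul : (b - 1) * m.length + m.length = b * m.length := by
    rw [Nat.sub_one_mul]
    exact Nat.sub_add_cancel (Nat.le_mul_of_pos_left _ hb)
  refine ⟨by omega, by omega, by omega, by omega, ?_⟩
  rw [hsum, hwg, hhead, hlen]
  omega

lemma pair_eq (a b c d : ℕ) (hs : a + b = c + d) (hp : a * b = c * d) :
    (a = c ∧ b = d) ∨ (a = d ∧ b = c) := by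
  have h1 : ((c : ℤ) + d) = a + b := by exact_mod_cast hs.symm
  have h2 : ((c : ℤ) * d) = a * b := by exact_mod_cast hp.symm
  have h0 : ((a : ℤ) - c) * ((a : ℤ) - d) = 0 := by linear_combination (-(a:ℤ)) * h1 + h2
  rcases mul_eq_zero.1 h0 with h | h
  · left; constructor <;> [exact_mod_cast sub_eq_zero.1 h; omega]
  · right
    have : a = d := by exact_mod_cast sub_eq_zero.1 h
    exact ⟨this, by omega⟩

/-- two palindrome partitions of the same `n` whose words have
the same length have the same counts of zeros and ones up to swapping;
equivalently the unordered pair (largest part, number of parts) is the same. -/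
theorem palindromePaper_stmt11 (n : ℕ) (l μ : List ℕ)
    (hl : IsPartition l) (hlne : l ≠ []) (hlsum : l.sum = n)
    (hlpal : partitionWord l = (partitionWord l).reverse)
    (hμ : IsPartition μ) (hμne : μ ≠ []) (hμsum : μ.sum = n)
    (hμpal : partitionWord μ = (partitionWord μ).reverse)
    (hlen : (partitionWord μ).length = (partitionWord l).length) :
    (μ.headI = l.headI ∧ μ.length = l.length) ∨
      (μ.headI = l.length ∧ μ.length = l.headI) := by
  obtain ⟨hA1, hR1, hct1, hcf1, hsum1⟩ := key l hl hlne
  obtain ⟨hA2, hR2, hct2, hcf2, hsum2⟩ := key μ hμ hμne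
  -- palindrome gives 2*gfun = count true * count false
  have hpal1 : 2 * gfun (partitionWord l)
      = (partitionWord l).count true * (partitionWord l).count false := by
    have := gfun_add_hfun (partitionWord l)
    have hr : gfun (partitionWord l) = hfun (partitionWord l) := by
      conv_lhs => rw [hlpal]
      exact gfun_reverse _
    omega
  have hpal2 : 2 * gfun (partitionWord μ)
      = (partitionWord μ).count true * (partitionWord μ).count false := by
    have := gfun_add_hfun (partitionWord μ)
    have hr : gfun (partitionWord μ) = hfun (partitionWord μ) := by
      conv_lhs => rw [hμpal]
      exact gfun_reverse _
    omega
  have hlen1 := count_true_add_count_false (partitionWord l)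
  have hlen2 := count_true_add_count_false (partitionWord μ)
  set a := (partitionWord l).count true with ha
  set b := (partitionWord l).count false with hbb
  set c := (partitionWord μ).count true with hc
  set d := (partitionWord μ).count false with hd
  have hsumeq : c + d = a + b := by omega
  have hgeq : gfun (partitionWord μ) = gfun (partitionWord l) := by omega
  have hprod : c * d = a * b := by
    have h2 : 2 * (c * d) = 2 * (a * b) := by rw [← hpal1, ← hpal2, hgeq]
    omega
  rcases pair_eq c d a b hsumeq hprod with ⟨h1, h2⟩ | ⟨h1, h2⟩
  · left; constructor <;> omega
  · right; constructor <;> omega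
end
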